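/- arXiv:1811.02139 — 4 statements merged into one kernel-verified Lean document; each statement's English description precedes it below -/
import Mathlib

section
/- (Bourgain–Fremlin–Talagrand) Let X be a compact Hausdorff topological space and A ⊆ C(X) with |A| ≤ ℵ_0 and sup_{f ∈ A} ||f||_∞ < ∞. Then the following are equivalent: (i) A is sequentially dependent as a subset of ℝ^X; (ii) for every f ∈ ℝ^X, if f lies in the closure of A in ℝ^X with the product topology, then there exists a sequence (f_i)_{i ∈ ℕ} of elements of A converging pointwise to f. -/
open Filter Topology

/-- A set `A ⊆ ℝ^Y` is sequentially independent if there are a sequence `(f_n)` of elements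
of `A`, a real `r`, and `ε > 0` such that for every `I ⊆ ℕ` there is `b_I ∈ Y` with
`{n : f_n(b_I) ≤ r} = I` and `{n : f_n(b_I) ≥ r + ε} = ℕ ∖ I`. -/
def SeqIndependent {Y : Type*} (A : Set (Y → ℝ)) : Prop :=
  ∃ f : ℕ → (Y → ℝ), (∀ n, f n ∈ A) ∧ ∃ r ε : ℝ, 0 < ε ∧
    ∀ I : Set ℕ, ∃ b : Y, {n : ℕ | f n b ≤ r} = I ∧ {n : ℕ | r + ε ≤ f n b} = Iᶜ

open Set

/-- Basic "weak-topology" sets determined by finitely many strict rational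
inequalities on the functions `a n`. -/
def Bof {X : Type*} [TopologicalSpace X] (a : ℕ → C(X, ℝ)) (l : List (ℕ × Bool × ℚ)) :
    Set X :=
  {x | ∀ e ∈ l, (e.2.1 = true → a e.1 x < (e.2.2 : ℝ)) ∧ (e.2.1 = false → (e.2.2 : ℝ) < a e.1 x)}

/-- `a n` crosses the rational gap `(p,q)` on the set `S`. -/
def XCross {X : Type*} [TopologicalSpace X] (a : ℕ → C(X, ℝ)) (n : ℕ) (S : Set X)
    (p q : ℚ) : Prop :=
  (∃ u ∈ S, a n u < (p : ℝ)) ∧ (∃ v ∈ S, (q : ℝ) < a n v)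

lemma Bof_append {X : Type*} [TopologicalSpace X] (a : ℕ → C(X, ℝ))
    (l₁ l₂ : List (ℕ × Bool × ℚ)) : Bof a (l₁ ++ l₂) = Bof a l₁ ∩ Bof a l₂ := by
  ext x
  simp only [Bof, mem_setOf_eq, List.mem_append, mem_inter_iff]
  constructor
  · intro h; exact ⟨fun e he => h e (Or.inl he), fun e he => h e (Or.inr he)⟩
  · rintro ⟨h1, h2⟩ e (he | he)
    · exact h1 e he
    · exact h2 e he

lemma Bof_nil {X : Type*} [TopologicalSpace X] (a : ℕ → C(X, ℝ)) : Bof a [] = univ := by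
  ext x; simp [Bof]

/-- Realizability of all finite patterns yields sequential independence
(by compactness of `X`). -/
lemma indep_of_patterns {X : Type*} [TopologicalSpace X] [CompactSpace X]
    (A : Set C(X, ℝ)) (F : ℕ → C(X, ℝ)) (hF : ∀ n, F n ∈ A) (p q : ℚ) (hpq : p < q)
    (hpat : ∀ (N : ℕ) (z : ℕ → Bool), ∃ x : X, ∀ i < N,
      (z i = false → F i x ≤ (p : ℝ)) ∧ (z i = true → (q : ℝ) ≤ F i x)) :
    SeqIndependent ((fun g : C(X, ℝ) => (g : X → ℝ)) '' A) := by
  classical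
  refine ⟨fun n => (F n : X → ℝ), fun n => ⟨F n, hF n, rfl⟩, (p : ℝ), (q : ℝ) - p,
    by exact_mod_cast sub_pos.mpr hpq, ?_⟩
  intro I
  set K : ℕ → Set X := fun N =>
    {x | ∀ i < N, (i ∈ I → F i x ≤ (p : ℝ)) ∧ (i ∉ I → (q : ℝ) ≤ F i x)} with hK
  have hKdec : ∀ N, K (N + 1) ⊆ K N := by
    intro N x hx i hi
    exact hx i (Nat.lt_succ_of_lt hi)
  have hKne : ∀ N, (K N).Nonempty := by
    intro N
    obtain ⟨x, hx⟩ := hpat N (fun i => decide (i ∉ I))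
    refine ⟨x, fun i hi => ⟨fun hiI => ?_, fun hiI => ?_⟩⟩
    · exact (hx i hi).1 (by simp [hiI])
    · exact (hx i hi).2 (by simp [hiI])
  have hKcl : ∀ N, IsClosed (K N) := by
    intro N
    have : K N = ⋂ i, ⋂ _ : i < N,
        (({x | i ∈ I → F i x ≤ (p : ℝ)}) ∩ ({x | i ∉ I → (q : ℝ) ≤ F i x})) := by
      ext x
      constructor
      · intro h
        exact mem_iInter.mpr fun i => mem_iInter.mpr fun hi => ⟨(h i hi).1, (h i hi).2⟩
      · intro h i hi
        have h2 := mem_iInter.mp (mem_iInter.mp h i) hi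
        exact ⟨h2.1, h2.2⟩
    rw [this]
    refine isClosed_iInter fun i => isClosed_iInter fun _ => IsClosed.inter ?_ ?_
    · by_cases hiI : i ∈ I
      · have : {x | i ∈ I → F i x ≤ (p : ℝ)} = {x | F i x ≤ (p : ℝ)} := by
          ext x; simp [hiI]
        rw [this]; exact isClosed_le (F i).continuous continuous_const
      · have : {x | i ∈ I → F i x ≤ (p : ℝ)} = univ := by
          ext x; simp [hiI]
        rw [this]; exact isClosed_univ
    · by_cases hiI : i ∈ I
      · have : {x | i ∉ I → (q : ℝ) ≤ F i x} = univ := by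
          ext x; simp [hiI]
        rw [this]; exact isClosed_univ
      · have : {x | i ∉ I → (q : ℝ) ≤ F i x} = {x | (q : ℝ) ≤ F i x} := by
          ext x; simp [hiI]
        rw [this]; exact isClosed_le continuous_const (F i).continuous
  have hKcomp : IsCompact (K 0) := (hKcl 0).isCompact
  obtain ⟨b, hb⟩ := IsCompact.nonempty_iInter_of_sequence_nonempty_isCompact_isClosed
    K hKdec hKne hKcomp hKcl
  have hbN : ∀ N, b ∈ K N := fun N => mem_iInter.mp hb N
  have hqp : (p : ℝ) < (q : ℝ) := by exact_mod_cast hpq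
  refine ⟨b, ?_, ?_⟩
  · ext n
    simp only [mem_setOf_eq]
    constructor
    · intro hn
      by_contra hnI
      have := (hbN (n + 1) n (Nat.lt_succ_self n)).2 hnI
      linarith
    · intro hn
      exact (hbN (n + 1) n (Nat.lt_succ_self n)).1 hn
  · ext n
    simp only [mem_setOf_eq, mem_compl_iff]
    have hpe : (p : ℝ) + ((q : ℝ) - p) = (q : ℝ) := by ring
    rw [hpe]
    constructor
    · intro hn hnI
      have := (hbN (n + 1) n (Nat.lt_succ_self n)).1 hnI
      linarith
    · intro hn
      exact (hbN (n + 1) n (Nat.lt_succ_self n)).2 hn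

section Case2

variable {X : Type*} [TopologicalSpace X] [CompactSpace X]

/-- From a "crossing-certified" set `P`, build realizability of all finite patterns. -/
lemma case2_patterns
    (a : ℕ → C(X, ℝ)) (V : Ultrafilter ℕ)
    (p q : ℚ) (P : Set X) (hP : P.Nonempty)
    (hcert : ∀ l, (Bof a l ∩ P).Nonempty → {n | XCross a n (Bof a l ∩ P) p q} ∈ V) :
    ∃ ns : ℕ → ℕ, ∀ (N : ℕ) (z : ℕ → Bool), ∃ x : X, ∀ i < N,
      (z i = false → a (ns i) x < (p : ℝ)) ∧ (z i = true → (q : ℝ) < a (ns i) x) := by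
  classical
  -- entries
  set ent : Bool → ℕ → (ℕ × Bool × ℚ) := fun b m => if b then (m, false, q) else (m, true, p)
    with hent
  set cellL : List ℕ → (ℕ → Bool) → Set X := fun ns' z =>
    Bof a ((List.range ns'.length).map (fun i => ent (z i) (ns'.getD i 0))) ∩ P with hcellL
  set pick : List ℕ → ℕ := fun ns' =>
    if h : ({n | ∀ z : ℕ → Bool, XCross a n (cellL ns' z) p q}).Nonempty then h.choose else 0
    with hpick
  set pfx : ℕ → List ℕ := fun j => Nat.rec [] (fun _ acc => acc ++ [pick acc]) j with hpfx
  set ns : ℕ → ℕ := fun j => pick (pfx j) with hns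
  have hpfx_succ : ∀ j, pfx (j + 1) = pfx j ++ [pick (pfx j)] := fun j => rfl
  have hpfx_eq : ∀ j, pfx j = (List.range j).map ns := by
    intro j
    induction j with
    | zero => simp [hpfx]
    | succ j ih =>
      rw [hpfx_succ, ih, List.range_succ, List.map_append]
      simp [hns, ih]
  have hpfx_len : ∀ j, (pfx j).length = j := by
    intro j; rw [hpfx_eq]; simp
  have hpfx_getD : ∀ j i, i < j → (pfx j).getD i 0 = ns i := by
    intro j i hij
    rw [hpfx_eq]
    have hi : i < ((List.range j).map ns).length := by simpa using hij
    rw [List.getD_eq_getElem _ _ hi]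
    simp
  -- cells directly through ns
  set cellN : ℕ → (ℕ → Bool) → Set X := fun j z =>
    Bof a ((List.range j).map (fun i => ent (z i) (ns i))) ∩ P with hcellN
  have hcell_eq : ∀ j z, cellL (pfx j) z = cellN j z := by
    intro j z
    simp only [hcellL, hcellN, hpfx_len]
    have hl : (List.map (fun i => ent (z i) ((pfx j).getD i 0)) (List.range j))
        = List.map (fun i => ent (z i) (ns i)) (List.range j) := by
      apply List.map_congr_left
      intro i hi
      rw [List.mem_range] at hi
      rw [hpfx_getD j i hi]
    rw [hl]
  have hcell_succ : ∀ j z, cellN (j + 1) z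
      = cellN j z ∩ Bof a [ent (z j) (ns j)] := by
    intro j z
    simp only [hcellN, List.range_succ, List.map_append, Bof_append]
    simp only [List.map_cons, List.map_nil]
    rw [inter_right_comm]
  -- membership facts in `Bof` of a single entry
  have hBsingle_low : ∀ (m : ℕ) (x : X), x ∈ Bof a [ent false m] ↔ a m x < (p : ℝ) := by
    intro m x
    simp [Bof, hent]
  have hBsingle_high : ∀ (m : ℕ) (x : X), x ∈ Bof a [ent true m] ↔ (q : ℝ) < a m x := by
    intro m x
    simp [Bof, hent]
  -- invariants
  have main : ∀ j, (∀ z, (cellN j z).Nonempty) := by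
    intro j
    induction j with
    | zero =>
      intro z
      simpa [hcellN, Bof_nil] using hP
    | succ j ih =>
      -- first: the common-crossing set at level j is in V
      have hgood : {n | ∀ z : ℕ → Bool, XCross a n (cellN j z) p q} ∈ V := by
        have hrw : {n | ∀ z : ℕ → Bool, XCross a n (cellN j z) p q}
            = ⋂ v : Fin j → Bool, {n | XCross a n
                (cellN j (fun i => if h : i < j then v ⟨i, h⟩ else false)) p q} := by
          ext n
          simp only [mem_setOf_eq, mem_iInter]
          constructor
          · intro h v
            exact h _
          · intro h z
            have : cellN j z = cellN j (fun i => if h : i < j then (fun k : Fin j => z k) ⟨i, h⟩ else false) := by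
              simp only [hcellN]
              have hl : (List.map (fun i => ent (z i) (ns i)) (List.range j))
                  = List.map (fun i => ent ((fun i => if h : i < j then (fun k : Fin j => z k) ⟨i, h⟩ else false) i) (ns i)) (List.range j) := by
                apply List.map_congr_left
                intro i hi
                rw [List.mem_range] at hi
                simp [hi]
              rw [hl]
            rw [this]
            exact h (fun k : Fin j => z k)
        rw [hrw, ← Ultrafilter.mem_coe, Filter.iInter_mem]
        intro v
        have hne := ih (fun i => if h : i < j then v ⟨i, h⟩ else false)
        exact hcert _ hne
      have hSeq : {n | ∀ z : ℕ → Bool, XCross a n (cellL (pfx j) z) p q}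
          = {n | ∀ z : ℕ → Bool, XCross a n (cellN j z) p q} := by
        ext n
        simp only [mem_setOf_eq]
        constructor <;> intro h z
        · rw [← hcell_eq]; exact h z
        · rw [hcell_eq]; exact h z
      have hneL : ({n | ∀ z : ℕ → Bool, XCross a n (cellL (pfx j) z) p q}).Nonempty := by
        rw [hSeq]
        exact Ultrafilter.nonempty_of_mem hgood
      have hnsj : ∀ z, XCross a (ns j) (cellN j z) p q := by
        intro z
        have hkey : ns j ∈ {n | ∀ z : ℕ → Bool, XCross a n (cellL (pfx j) z) p q} := by
          have hEq : ns j = hneL.choose := by simp only [hns, hpick, dif_pos hneL]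
          rw [hEq]
          exact hneL.choose_spec
        have h2 := hkey z
        rw [← hcell_eq j z]
        exact h2
      intro z
      rw [hcell_succ]
      rcases hnsj z with ⟨⟨u, hu, hul⟩, ⟨v, hv, hvh⟩⟩
      cases hzj : z j
      · exact ⟨u, hu, (hBsingle_low (ns j) u).mpr hul⟩
      · exact ⟨v, hv, (hBsingle_high (ns j) v).mpr hvh⟩
  -- conclude pattern realizability
  refine ⟨ns, fun N z => ?_⟩
  obtain ⟨x, hx1, _⟩ := main N z
  refine ⟨x, fun i hi => ?_⟩
  have hmem : (ent (z i) (ns i)) ∈ (List.range N).map (fun i => ent (z i) (ns i)) :=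
    List.mem_map.mpr ⟨i, List.mem_range.mpr hi, rfl⟩
  have hcond := hx1 _ hmem
  constructor
  · intro hzi
    rw [hzi] at hcond
    have := hcond.1 (by simp [hent])
    simpa [hent] using this
  · intro hzi
    rw [hzi] at hcond
    have := hcond.2 (by simp [hent])
    simpa [hent] using this

end Case2

lemma cert_cover {X : Type*} [TopologicalSpace X] (a : ℕ → C(X, ℝ)) (V : Ultrafilter ℕ)
    (p q : ℚ)
    (hflat : ∀ P : Set X, P.Nonempty →
      ∃ l, (Bof a l ∩ P).Nonempty ∧ {n | XCross a n (Bof a l ∩ P) p q} ∉ V) :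
    ∃ (CL : Set (List (ℕ × Bool × ℚ))) (cs : List (ℕ × Bool × ℚ) → Set X),
      (∀ l ∈ CL, {n | XCross a n (Bof a l ∩ cs l) p q} ∉ V) ∧
      (∀ x : X, ∃ l ∈ CL, x ∈ Bof a l ∧ x ∈ cs l) := by
  classical
  set T := (Cardinal.aleph 1).ord.ToType with hT
  haveI hTne : Nonempty T := by
    rw [hT]
    rw [Ordinal.toType_nonempty_iff_ne_zero]
    intro h0
    have := Cardinal.card_ord (Cardinal.aleph 1)
    rw [h0] at this
    simp only [Ordinal.card_zero] at this
    have hpos : (0 : Cardinal) < Cardinal.aleph 1 :=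
      lt_trans Cardinal.aleph0_pos Cardinal.aleph0_lt_aleph_one
    rw [← this] at hpos
    exact lt_irrefl _ hpos
  have wf : WellFounded ((· < ·) : T → T → Prop) := wellFounded_lt
  set D : T → Set X := wf.fix (fun t ih =>
    {x | ∀ l : List (ℕ × Bool × ℚ),
      (∃ t', ∃ h : t' < t, {n | XCross a n (Bof a l ∩ ih t' h) p q} ∉ V) → x ∉ Bof a l})
    with hDdef
  have hD : ∀ t, D t = {x | ∀ l : List (ℕ × Bool × ℚ),
      (∃ t', t' < t ∧ {n | XCross a n (Bof a l ∩ D t') p q} ∉ V) → x ∉ Bof a l} := by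
    intro t
    rw [hDdef]
    rw [WellFounded.fix_eq]
    simp only [exists_prop]
  -- stabilization at ∅
  have hstab : ∃ t, D t = ∅ := by
    by_contra hco
    push_neg at hco
    have hne : ∀ t, (D t).Nonempty := hco
    choose lt hlt1 hlt2 using fun t => hflat (D t) (hne t)
    have hinj : Function.Injective lt := by
      intro t t' heq
      by_contra hne'
      rcases lt_or_gt_of_ne hne' with hlt' | hlt'
      · obtain ⟨x, hxB, hxD⟩ := hlt1 t'
        rw [hD t'] at hxD
        exact (hxD (lt t) ⟨t, hlt', hlt2 t⟩) (heq ▸ hxB)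
      · obtain ⟨x, hxB, hxD⟩ := hlt1 t
        rw [hD t] at hxD
        exact (hxD (lt t') ⟨t', hlt', hlt2 t'⟩) (heq ▸ hxB)
    have hcard := Cardinal.mk_le_of_injective hinj
    have hTcard : Cardinal.mk T = Cardinal.aleph 1 := by
      rw [hT, Cardinal.mk_toType, Cardinal.card_ord]
    have hlist : Cardinal.mk (List (ℕ × Bool × ℚ)) ≤ Cardinal.aleph0 :=
      Cardinal.mk_le_aleph0
    rw [hTcard] at hcard
    exact absurd (hcard.trans hlist) (not_le.mpr Cardinal.aleph0_lt_aleph_one)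
  -- certificates
  set Flat : List (ℕ × Bool × ℚ) → T → Prop :=
    fun l t => {n | XCross a n (Bof a l ∩ D t) p q} ∉ V with hFlat
  set CL : Set (List (ℕ × Bool × ℚ)) := {l | ∃ t, Flat l t} with hCL
  set stg : List (ℕ × Bool × ℚ) → T := fun l =>
    if h : ∃ t, Flat l t then wf.min {t | Flat l t} h else Classical.arbitrary T with hstg
  refine ⟨CL, fun l => D (stg l), ?_, ?_⟩
  · intro l hl
    show {n | XCross a n (Bof a l ∩ D (stg l)) p q} ∉ V
    have heq : stg l = wf.min {t | Flat l t} hl := dif_pos hl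
    rw [heq]
    exact wf.min_mem {t | Flat l t} hl
  · intro x
    obtain ⟨t0, ht0⟩ := hstab
    have hxne : ({t | x ∉ D t}).Nonempty := ⟨t0, by show x ∉ D t0; rw [ht0]; exact notMem_empty x⟩
    set tx := wf.min {t | x ∉ D t} hxne with htx
    have hxtx : x ∉ D tx := wf.min_mem {t | x ∉ D t} hxne
    rw [hD tx] at hxtx
    simp only [mem_setOf_eq, not_forall, Classical.not_imp, not_not] at hxtx
    obtain ⟨l, ⟨t', ht', hflat'⟩, hxB⟩ := hxtx
    have hlCL : l ∈ CL := ⟨t', hflat'⟩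
    refine ⟨l, hlCL, hxB, ?_⟩
    show x ∈ D (stg l)
    have hstgle : stg l ≤ t' := by
      have heq : stg l = wf.min {t | Flat l t} hlCL := dif_pos hlCL
      rw [heq]
      by_contra hgt
      push_neg at hgt
      exact wf.not_lt_min {t | Flat l t} hflat' hgt
    have hlt_tx : stg l < tx := lt_of_le_of_lt hstgle ht'
    by_contra hxcs
    exact wf.not_lt_min {t | x ∉ D t} hxcs hlt_tx

lemma case1 {X : Type*} [TopologicalSpace X] [Nonempty X]
    (a : ℕ → C(X, ℝ)) (V : Ultrafilter ℕ) (f : X → ℝ)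
    (hVx : ∀ x, Tendsto (fun n => a n x) (V : Filter ℕ) (𝓝 (f x)))
    (C : ℝ) (hC : ∀ (n : ℕ) (x : X), |a n x| ≤ C)
    (hflat : ∀ p q : ℚ, p < q → ∀ P : Set X, P.Nonempty →
      ∃ l, (Bof a l ∩ P).Nonempty ∧ {n | XCross a n (Bof a l ∩ P) p q} ∉ V) :
    ∃ ns : ℕ → ℕ, ∀ x, Tendsto (fun k => a (ns k) x) atTop (𝓝 (f x)) := by
  classical
  -- per-pair certificate data
  have hcc : ∀ p q : ℚ, ∃ (CL : Set (List (ℕ × Bool × ℚ))) (cs : List (ℕ × Bool × ℚ) → Set X),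
      p < q → ((∀ l ∈ CL, {n | XCross a n (Bof a l ∩ cs l) p q} ∉ V) ∧
        (∀ x : X, ∃ l ∈ CL, x ∈ Bof a l ∧ x ∈ cs l)) := by
    intro p q
    by_cases hpq : p < q
    · obtain ⟨CL, cs, h1, h2⟩ := cert_cover a V p q (hflat p q hpq)
      exact ⟨CL, cs, fun _ => ⟨h1, h2⟩⟩
    · exact ⟨∅, fun _ => ∅, fun h => absurd h hpq⟩
  choose CLf csf hccs using hcc
  -- rational bound
  obtain ⟨CQ, hCQ⟩ := exists_rat_gt (C + 1)
  -- grid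
  set gp : ℚ → ℕ → ℚ := fun δ i => -CQ + i * δ with hgp
  set K : ℚ → ℕ := fun δ => ⌈(2 * CQ) / δ⌉₊ with hKdef
  have hgpK : ∀ δ : ℚ, 0 < δ → CQ ≤ gp δ (K δ) := by
    intro δ hδ
    have h1 : (2 * CQ) / δ ≤ (K δ : ℚ) := Nat.le_ceil _
    have h2 : 2 * CQ ≤ (K δ : ℚ) * δ := by
      rw [div_le_iff₀ hδ] at h1
      linarith
    simp only [hgp]
    linarith
  have hCpos : 0 < (CQ : ℝ) := by
    have h0 : (0:ℝ) ≤ |a 0 (Classical.arbitrary X)| := abs_nonneg _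
    have := hC 0 (Classical.arbitrary X)
    linarith
  -- choice of certificates at points
  have hpick : ∀ (p q : ℚ), p < q → ∀ x : X,
      ∃ l, l ∈ CLf p q ∧ x ∈ Bof a l ∧ x ∈ csf p q l := by
    intro p q h x
    obtain ⟨l, hl1, hl2, hl3⟩ := (hccs p q h).2 x
    exact ⟨l, hl1, hl2, hl3⟩
  set chC : ℚ → ℚ → X → List (ℕ × Bool × ℚ) := fun p q x =>
    if h : p < q then (hpick p q h x).choose else [] with hchC
  have hchC_spec : ∀ (p q : ℚ) (h : p < q) (x : X),
      chC p q x ∈ CLf p q ∧ x ∈ Bof a (chC p q x) ∧ x ∈ csf p q (chC p q x) := by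
    intro p q h x
    have heq : chC p q x = (hpick p q h x).choose := dif_pos h
    rw [heq]
    exact (hpick p q h x).choose_spec
  -- the cert set of a pair and a list
  set CS : ℚ → ℚ → List (ℕ × Bool × ℚ) → Set X := fun p q l => Bof a l ∩ csf p q l with hCS
  -- combo sets and demand points
  set comboSet : ℚ → List (List (ℕ × Bool × ℚ)) → Set X := fun δ ls =>
    ⋂ i ∈ Finset.range ls.length, CS (gp δ i) (gp δ i + δ) (ls.getD i []) with hcombo
  set dpt : ℚ → List (List (ℕ × Bool × ℚ)) → X := fun δ ls =>
    if h : (comboSet δ ls).Nonempty then h.choose else Classical.arbitrary X with hdpt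
  -- the list of certificates chosen at x
  set lsx : ℚ → X → List (List (ℕ × Bool × ℚ)) := fun δ x =>
    (List.range (K δ)).map (fun i => chC (gp δ i) (gp δ i + δ) x) with hlsx
  have hlsx_len : ∀ δ x, (lsx δ x).length = K δ := by
    intro δ x; simp [hlsx]
  have hlsx_getD : ∀ δ x i, i < K δ → (lsx δ x).getD i [] = chC (gp δ i) (gp δ i + δ) x := by
    intro δ x i hi
    have hi' : i < (lsx δ x).length := by rw [hlsx_len]; exact hi
    rw [List.getD_eq_getElem _ _ hi']
    simp [hlsx]
  have hgp_lt : ∀ (δ : ℚ), 0 < δ → ∀ i, gp δ i < gp δ i + δ := by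
    intro δ hδ i; linarith
  have hx_mem : ∀ (δ : ℚ), 0 < δ → ∀ (x : X) (i : ℕ), i < K δ →
      x ∈ CS (gp δ i) (gp δ i + δ) ((lsx δ x).getD i []) := by
    intro δ hδ x i hi
    rw [hlsx_getD δ x i hi]
    obtain ⟨h1, h2, h3⟩ := hchC_spec (gp δ i) (gp δ i + δ) (hgp_lt δ hδ i) x
    exact ⟨h2, h3⟩
  have hx_combo : ∀ (δ : ℚ), 0 < δ → ∀ x : X, x ∈ comboSet δ (lsx δ x) := by
    intro δ hδ x
    simp only [hcombo]
    refine mem_iInter₂.mpr fun i hi => ?_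
    rw [Finset.mem_range, hlsx_len] at hi
    exact hx_mem δ hδ x i hi
  have hdpt_mem : ∀ (δ : ℚ) (ls : List (List (ℕ × Bool × ℚ))), (comboSet δ ls).Nonempty →
      dpt δ ls ∈ comboSet δ ls := by
    intro δ ls h
    have heq : dpt δ ls = h.choose := dif_pos h
    rw [heq]
    exact h.choose_spec
  -- demand sets
  set e1 : ℚ × ℚ × List (ℕ × Bool × ℚ) → Set ℕ := fun w =>
    if w.2.2 ∈ CLf w.1 w.2.1 ∧ w.1 < w.2.1 then
      {n | ¬ XCross a n (CS w.1 w.2.1 w.2.2) w.1 w.2.1} else univ with he1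
  set e2 : (ℚ × List (List (ℕ × Bool × ℚ))) × ℕ → Set ℕ := fun w =>
    {n | |a n (dpt w.1.1 w.1.2) - f (dpt w.1.1 w.1.2)| ≤ 1 / (w.2 + 1)} with he2
  set D : Set (Set ℕ) := range e1 ∪ range e2 with hD
  have hDV : ∀ s ∈ D, s ∈ V := by
    rintro s (⟨w, rfl⟩ | ⟨w, rfl⟩)
    · simp only [he1]
      split_ifs with hw
      · have h1 := (hccs w.1 w.2.1 hw.2).1 w.2.2 hw.1
        have : {n | ¬ XCross a n (CS w.1 w.2.1 w.2.2) w.1 w.2.1}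
            = {n | XCross a n (CS w.1 w.2.1 w.2.2) w.1 w.2.1}ᶜ := rfl
        rw [this]
        exact Ultrafilter.compl_mem_iff_notMem.mpr h1
      · exact univ_mem
    · simp only [he2]
      have hpos : (0:ℝ) < 1 / (w.2 + 1) := by positivity
      have := Metric.tendsto_nhds.mp (hVx (dpt w.1.1 w.1.2)) _ hpos
      refine Filter.mem_of_superset this ?_
      intro n hn
      simp only [mem_setOf_eq] at hn ⊢
      rw [Real.dist_eq] at hn
      exact hn.le
  have hDcnt : D.Countable := (countable_range e1).union (countable_range e2)
  have hDne : D.Nonempty :=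
    ⟨e2 (((0:ℚ), ([] : List (List (ℕ × Bool × ℚ)))), (0:ℕ)),
      Or.inr ⟨(((0:ℚ), ([] : List (List (ℕ × Bool × ℚ)))), (0:ℕ)), rfl⟩⟩
  obtain ⟨N, hN⟩ := hDcnt.exists_eq_range hDne
  have hNV : ∀ m, N m ∈ V := fun m => hDV (N m) (hN ▸ mem_range_self m)
  -- the subsequence
  have hin : ∀ k, (⋂ m ∈ {m | m ≤ k}, N m).Nonempty := fun k =>
    Ultrafilter.nonempty_of_mem ((Filter.biInter_mem (finite_le_nat k)).mpr fun m _ => hNV m)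
  set ns : ℕ → ℕ := fun k => (hin k).choose with hns
  have hns_mem : ∀ k m, m ≤ k → ns k ∈ N m := by
    intro k m hm
    have := (hin k).choose_spec
    rw [mem_iInter₂] at this
    exact this m hm
  have hevent : ∀ s ∈ D, ∀ᶠ k in atTop, ns k ∈ s := by
    intro s hs
    rw [hN] at hs
    obtain ⟨m, rfl⟩ := hs
    exact eventually_atTop.mpr ⟨m, fun k hk => hns_mem k m hk⟩
  -- grid lemma
  have hgrid : ∀ (δ : ℚ), 0 < δ → δ ≤ 1 → ∀ (S : ℕ → Set X) (n : ℕ) (x d : X),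
      (∀ i, i < K δ → ¬ XCross a n (S i) (gp δ i) (gp δ i + δ)) →
      (∀ i, i < K δ → x ∈ S i ∧ d ∈ S i) →
      |a n x - a n d| ≤ 2 * (δ : ℝ) := by
    intro δ hδ hδ1 S n x d hcr hmem
    have key : ∀ (u v : X), (∀ i, i < K δ → u ∈ S i ∧ v ∈ S i) →
        a n v - a n u ≤ 2 * (δ : ℝ) := by
      intro u v hm
      by_contra hgt
      push_neg at hgt
      have hex : ∃ i, a n u < ((gp δ i : ℚ) : ℝ) := by
        refine ⟨K δ, ?_⟩
        have h1 : (CQ : ℝ) ≤ ((gp δ (K δ) : ℚ) : ℝ) := by exact_mod_cast hgpK δ hδ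
        have h2 := hC n u
        have h3 : a n u ≤ |a n u| := le_abs_self _
        linarith
      set i0 := Nat.find hex with hi0
      have hfound : a n u < ((gp δ i0 : ℚ) : ℝ) := Nat.find_spec hex
      have hipos : 0 < i0 := by
        rcases Nat.eq_zero_or_pos i0 with h | h
        · exfalso
          have := hfound
          rw [h] at this
          have hgp0 : ((gp δ 0 : ℚ) : ℝ) = -(CQ : ℝ) := by
            simp [hgp]
          rw [hgp0] at this
          have h2 := hC n u
          have h3 : -|a n u| ≤ a n u := neg_abs_le _
          linarith
        · exact h
      have hprev : ¬ (a n u < ((gp δ (i0 - 1) : ℚ) : ℝ)) :=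
        Nat.find_min hex (Nat.sub_lt hipos Nat.one_pos)
      push_neg at hprev
      have hstep : gp δ i0 = gp δ (i0 - 1) + δ := by
        simp only [hgp]
        have : (i0 : ℚ) = ((i0 - 1 : ℕ) : ℚ) + 1 := by
          have := Nat.succ_pred_eq_of_pos hipos
          exact_mod_cast (by rw [← this]; push_cast; ring : (i0:ℚ) = ((i0-1:ℕ):ℚ) + 1)
        rw [this]
        ring
      have hgpi0 : ((gp δ i0 : ℚ) : ℝ) ≤ a n u + (δ : ℝ) := by
        rw [hstep]
        push_cast
        push_cast at hprev
        linarith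
      have hi0K : i0 < K δ := by
        by_contra hge
        push_neg at hge
        have hmono : gp δ (K δ) ≤ gp δ i0 := by
          simp only [hgp]
          have : (K δ : ℚ) ≤ (i0 : ℚ) := by exact_mod_cast hge
          nlinarith
        have h1 : (CQ : ℝ) ≤ ((gp δ i0 : ℚ) : ℝ) := by
          have := hgpK δ hδ
          exact_mod_cast (this.trans hmono)
        have h2 := hC n u
        have h3 : a n u ≤ |a n u| := le_abs_self _
        have h4 : (δ : ℝ) ≤ 1 := by exact_mod_cast hδ1
        linarith
      refine hcr i0 hi0K ⟨⟨u, (hm i0 hi0K).1, hfound⟩, ⟨v, (hm i0 hi0K).2, ?_⟩⟩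
      push_cast
      push_cast at hgpi0
      linarith
    have h1 := key x d (fun i hi => ⟨(hmem i hi).1, (hmem i hi).2⟩)
    have h2 := key d x (fun i hi => ⟨(hmem i hi).2, (hmem i hi).1⟩)
    rw [abs_sub_le_iff]
    constructor <;> linarith
  -- conclusion
  refine ⟨ns, fun x => ?_⟩
  rw [Metric.tendsto_atTop]
  intro ε hε
  -- choose δ
  have hmin : (0:ℝ) < min 1 (ε / 6) := by
    apply lt_min one_pos
    linarith
  obtain ⟨δ, hδ0, hδsm⟩ := exists_rat_btwn hmin
  have hδQ : 0 < δ := by exact_mod_cast hδ0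
  have hδ1 : δ ≤ 1 := by
    have h1 : (δ:ℝ) < 1 := lt_of_lt_of_le hδsm (min_le_left _ _)
    exact_mod_cast le_of_lt h1
  have hδε : (δ:ℝ) < ε / 6 := lt_of_lt_of_le hδsm (min_le_right _ _)
  -- data at the point x and scale δ
  set ls := lsx δ x with hls
  set d := dpt δ ls with hd
  have hxc : x ∈ comboSet δ ls := hx_combo δ hδQ x
  have hdc : d ∈ comboSet δ ls := hdpt_mem δ ls ⟨x, hxc⟩
  set S : ℕ → Set X := fun i => CS (gp δ i) (gp δ i + δ) (ls.getD i []) with hS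
  have hxS : ∀ i, i < K δ → x ∈ S i ∧ d ∈ S i := by
    intro i hi
    have hi' : i ∈ Finset.range ls.length := by
      rw [Finset.mem_range, hls, hlsx_len]; exact hi
    exact ⟨mem_iInter₂.mp hxc i hi', mem_iInter₂.mp hdc i hi'⟩
  have hNC : ∀ i, i < K δ →
      ({n | ¬ XCross a n (S i) (gp δ i) (gp δ i + δ)} ∈ D) := by
    intro i hi
    left
    refine ⟨(gp δ i, gp δ i + δ, ls.getD i []), ?_⟩
    have hcl : ls.getD i [] ∈ CLf (gp δ i) (gp δ i + δ) := by
      rw [hls, hlsx_getD δ x i hi]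
      exact (hchC_spec _ _ (hgp_lt δ hδQ i) x).1
    simp only [he1]
    rw [if_pos ⟨hcl, hgp_lt δ hδQ i⟩]
  obtain ⟨m0, hm0⟩ := exists_nat_one_div_lt (show (0:ℝ) < ε/6 by linarith)
  have hND : ({n | |a n d - f d| ≤ 1 / (m0 + 1)} ∈ D) := by
    right
    exact ⟨((δ, ls), m0), rfl⟩
  have hev1 : ∀ᶠ k in atTop, ∀ i ∈ Finset.range (K δ),
      ns k ∈ {n | ¬ XCross a n (S i) (gp δ i) (gp δ i + δ)} := by
    rw [Filter.eventually_all_finset]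
    intro i hi
    exact hevent _ (hNC i (Finset.mem_range.mp hi))
  have hev2 : ∀ᶠ k in atTop, ns k ∈ {n | |a n d - f d| ≤ 1/(m0+1)} := hevent _ hND
  have hGV : (⋂ i ∈ Finset.range (K δ),
      {n | ¬ XCross a n (S i) (gp δ i) (gp δ i + δ)}) ∈ V := by
    rw [← Ultrafilter.mem_coe, Filter.biInter_finset_mem]
    intro i hi
    exact hDV _ (hNC i (Finset.mem_range.mp hi))
  have hfd : |f x - f d| ≤ 2*(δ:ℝ) := by
    have htd : Tendsto (fun n => |a n x - a n d|) (V : Filter ℕ) (𝓝 |f x - f d|) :=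
      ((hVx x).sub (hVx d)).abs
    refine le_of_tendsto htd ?_
    refine Filter.mem_of_superset hGV ?_
    intro n hn
    rw [mem_iInter₂] at hn
    simp only [mem_setOf_eq] at hn ⊢
    exact hgrid δ hδQ hδ1 S n x d
      (fun i hi => hn i (Finset.mem_range.mpr hi)) hxS
  obtain ⟨K1, hK1⟩ := eventually_atTop.mp hev1
  obtain ⟨K2, hK2⟩ := eventually_atTop.mp hev2
  refine ⟨max K1 K2, fun k hk => ?_⟩
  have h1 := hK1 k (le_trans (le_max_left _ _) hk)
  have h2 := hK2 k (le_trans (le_max_right _ _) hk)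
  simp only [mem_setOf_eq] at h1 h2
  have hgr : |a (ns k) x - a (ns k) d| ≤ 2*(δ:ℝ) :=
    hgrid δ hδQ hδ1 S (ns k) x d
      (fun i hi => by
        have := h1 i (Finset.mem_range.mpr hi)
        simpa using this) hxS
  rw [Real.dist_eq]
  have t1 : |a (ns k) x - f x| ≤ |a (ns k) x - a (ns k) d| + |a (ns k) d - f x| := by
    have := abs_sub_le (a (ns k) x) (a (ns k) d) (f x)
    linarith [abs_sub_le (a (ns k) x) (a (ns k) d) (f x)]
  have t2 : |a (ns k) d - f x| ≤ |a (ns k) d - f d| + |f d - f x| :=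
    abs_sub_le (a (ns k) d) (f d) (f x)
  have t3 : |f d - f x| = |f x - f d| := abs_sub_comm _ _
  linarith [hgr, h2, hfd, hm0, t1, t2]

theorem back_dir {X : Type*} [TopologicalSpace X] [CompactSpace X] [T2Space X]
    (A : Set C(X, ℝ)) (hbd : ∃ C : ℝ, ∀ f ∈ A, ‖f‖ ≤ C)
    (h : ∀ f : X → ℝ, f ∈ closure ((fun g : C(X, ℝ) => (g : X → ℝ)) '' A) →
        ∃ g : ℕ → C(X, ℝ), (∀ n, g n ∈ A) ∧
          ∀ x, Tendsto (fun n => g n x) atTop (𝓝 (f x))) :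
    ¬ SeqIndependent ((fun g : C(X, ℝ) => (g : X → ℝ)) '' A) := by
  classical
  rintro ⟨F, hFA, r, ε, hε, hb⟩
  obtain ⟨C, hC⟩ := hbd
  choose G hGA hGF using hFA
  have hFc : ∀ n, Continuous (F n) := fun n => (hGF n) ▸ (G n).continuous
  have hFb : ∀ n x, F n x ∈ Icc (-C) C := by
    intro n x
    have h1 : ‖G n x‖ ≤ ‖G n‖ := (G n).norm_coe_le_norm x
    have h2 : ‖G n‖ ≤ C := hC _ (hGA n)
    have h3 : |F n x| ≤ C := by rw [← hGF n]; simpa [Real.norm_eq_abs] using h1.trans h2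
    have h4 := abs_le.mp h3
    exact ⟨h4.1, h4.2⟩
  set U : Ultrafilter ℕ := Filter.hyperfilter ℕ with hU
  have hLx : ∀ x : X, ∃ y, Tendsto (fun n => F n x) (↑U) (𝓝 y) := by
    intro x
    obtain ⟨y, _, hle⟩ := (isCompact_Icc (a := -C) (b := C)).ultrafilter_le_nhds
      (U.map (fun n => F n x)) (by
        rw [Ultrafilter.coe_map, le_principal_iff]
        exact Filter.mem_map.mpr (Filter.univ_mem' (fun n => hFb n x)))
    exact ⟨y, by rwa [Ultrafilter.coe_map] at hle⟩
  choose L hL using hLx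
  have hmem : L ∈ closure ((fun g : C(X, ℝ) => (g : X → ℝ)) '' A) :=
    mem_closure_of_tendsto (tendsto_pi_nhds.mpr hL)
      (Eventually.of_forall fun n => ⟨G n, hGA n, hGF n⟩)
  obtain ⟨g, hgA, hgt⟩ := h L hmem
  choose β hβ1 hβ2 using fun z : ℕ → Bool => hb {n | z n = true}
  set σ : X → ℕ → Bool := fun x n => decide (F n x ≤ r) with hσdef
  set W : ℕ × Bool → Set X := fun p =>
    (⋂ n, (fun x => F n x) ⁻¹' (Iic r ∪ Ici (r + ε))) ∩
    (⋂ k, ⋂ _ : p.1 ≤ k, {x | cond p.2 (g k x ≤ r + ε/3) (r + 2*ε/3 ≤ g k x)}) with hWdef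
  have hWclosed : ∀ p, IsClosed (W p) := by
    rintro ⟨K, b⟩
    apply IsClosed.inter
    · exact isClosed_iInter fun n => (isClosed_Iic.union isClosed_Ici).preimage (hFc n)
    · refine isClosed_iInter fun k => isClosed_iInter fun _ => ?_
      cases b
      · exact isClosed_le continuous_const (g k).continuous
      · exact isClosed_le (g k).continuous continuous_const
  have hdichW : ∀ p x, x ∈ W p → ∀ n, F n x ≤ r ∨ r + ε ≤ F n x := by
    intro p x hx n
    have := mem_iInter.mp hx.1 n
    simpa using this
  have hσcont : ∀ p, ContinuousOn σ (W p) := by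
    intro p
    rw [continuousOn_iff_continuous_restrict]
    apply continuous_pi
    intro n
    rw [continuous_discrete_rng]
    intro b
    cases b
    · have hopen : IsOpen ((fun x : W p => F n x.1) ⁻¹' (Ioi r)) :=
        isOpen_Ioi.preimage ((hFc n).comp continuous_subtype_val)
      convert hopen using 1
      ext ⟨x, hx⟩
      simp only [mem_preimage, mem_singleton_iff, mem_Ioi, Set.restrict, Set.domRestrict, hσdef,
        decide_eq_false_iff_not, not_le]
    · have hopen : IsOpen ((fun x : W p => F n x.1) ⁻¹' (Iio (r + ε))) :=
        isOpen_Iio.preimage ((hFc n).comp continuous_subtype_val)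
      convert hopen using 1
      ext ⟨x, hx⟩
      simp only [mem_preimage, mem_singleton_iff, mem_Iio, Set.restrict, Set.domRestrict, hσdef,
        decide_eq_true_eq]
      constructor
      · intro h1; linarith
      · intro h1
        rcases hdichW p x hx n with h2 | h2
        · exact h2
        · linarith
  set S : ℕ × Bool → Set (ℕ → Bool) := fun p => σ '' W p with hSdef
  have hSclosed : ∀ p, IsClosed (S p) :=
    fun p => (((hWclosed p).isCompact).image_of_continuousOn (hσcont p)).isClosed
  have hβle : ∀ (z : ℕ → Bool) n, z n = true → F n (β z) ≤ r := by
    intro z n hn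
    have : n ∈ {n | F n (β z) ≤ r} := by rw [hβ1 z]; exact hn
    exact this
  have hβge : ∀ (z : ℕ → Bool) n, z n = false → r + ε ≤ F n (β z) := by
    intro z n hn
    have hmem2 : n ∈ {n | z n = true}ᶜ := by simp [hn]
    rw [← hβ2 z] at hmem2
    exact hmem2
  have hβdich : ∀ (z : ℕ → Bool) n, F n (β z) ≤ r ∨ r + ε ≤ F n (β z) := by
    intro z n
    cases hzn : z n
    · exact Or.inr (hβge z n hzn)
    · exact Or.inl (hβle z n hzn)
  have hσβ : ∀ z : ℕ → Bool, σ (β z) = z := by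
    intro z; funext n
    show decide (F n (β z) ≤ r) = z n
    cases hzn : z n
    · have := hβge z n hzn
      simp only [decide_eq_false_iff_not, not_le]; linarith
    · exact decide_eq_true (hβle z n hzn)
  have hLlow : ∀ x : X, ({n | F n x ≤ r} ∈ U) → L x ≤ r := by
    intro x hx
    have hx' : {n | F n x ≤ r} ∈ (U : Filter ℕ) := hx
    exact le_of_tendsto (hL x) hx'
  have hLhigh : ∀ x : X, (∀ n, F n x ≤ r ∨ r + ε ≤ F n x) →
      ({n | F n x ≤ r} ∉ U) → r + ε ≤ L x := by
    intro x hdich hx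
    have hc : {n | F n x ≤ r}ᶜ ∈ (U : Filter ℕ) := Ultrafilter.compl_mem_iff_notMem.mpr hx
    have hev : {n | r + ε ≤ F n x} ∈ (U : Filter ℕ) := by
      refine Filter.mem_of_superset hc fun n hn => ?_
      rcases hdich n with h1 | h1
      · exact absurd h1 hn
      · exact h1
    exact ge_of_tendsto (hL x) hev
  have hcover : ⋃ p, S p = univ := by
    ext z
    simp only [mem_iUnion, mem_univ, iff_true]
    by_cases hUz : {n | z n = true} ∈ U
    · have hLz : L (β z) ≤ r := by
        apply hLlow
        have he : {n | F n (β z) ≤ r} = {n | z n = true} := hβ1 z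
        rwa [he]
      have hev : ∀ᶠ k in atTop, g k (β z) < r + ε/3 :=
        (hgt (β z)).eventually_lt_const (by linarith)
      obtain ⟨K, hK⟩ := eventually_atTop.mp hev
      refine ⟨(K, true), β z, ⟨?_, ?_⟩, hσβ z⟩
      · exact mem_iInter.mpr fun n => by simpa using hβdich z n
      · refine mem_iInter.mpr fun k => mem_iInter.mpr fun hk => ?_
        show g k (β z) ≤ r + ε/3
        exact le_of_lt (hK k hk)
    · have hLz : r + ε ≤ L (β z) := by
        apply hLhigh (β z) (hβdich z)
        have he : {n | F n (β z) ≤ r} = {n | z n = true} := hβ1 z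
        rwa [he]
      have hev : ∀ᶠ k in atTop, r + 2*ε/3 < g k (β z) :=
        (hgt (β z)).eventually_const_lt (by linarith)
      obtain ⟨K, hK⟩ := eventually_atTop.mp hev
      refine ⟨(K, false), β z, ⟨?_, ?_⟩, hσβ z⟩
      · exact mem_iInter.mpr fun n => by simpa using hβdich z n
      · refine mem_iInter.mpr fun k => mem_iInter.mpr fun hk => ?_
        show r + 2*ε/3 ≤ g k (β z)
        exact le_of_lt (hK k hk)
  have hhomT : ∀ K z, z ∈ S (K, true) → {n | z n = true} ∈ U := by
    rintro K z ⟨x, hx, rfl⟩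
    have hset : {n | σ x n = true} = {n | F n x ≤ r} := by
      ext n
      show decide (F n x ≤ r) = true ↔ F n x ≤ r
      simp
    rw [hset]
    by_contra hc
    have h1 : r + ε ≤ L x := hLhigh x (hdichW _ x hx) hc
    have h2 : L x ≤ r + ε/3 := by
      refine le_of_tendsto (hgt x) ?_
      refine eventually_atTop.mpr ⟨K, fun k hk => ?_⟩
      exact mem_iInter.mp (mem_iInter.mp hx.2 k) hk
    linarith
  have hhomF : ∀ K z, z ∈ S (K, false) → {n | z n = true} ∉ U := by
    rintro K z ⟨x, hx, rfl⟩ hc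
    have hset : {n | σ x n = true} = {n | F n x ≤ r} := by
      ext n
      show decide (F n x ≤ r) = true ↔ F n x ≤ r
      simp
    rw [hset] at hc
    have h1 : L x ≤ r := hLlow x hc
    have h2 : r + 2*ε/3 ≤ L x := by
      refine ge_of_tendsto (hgt x) ?_
      refine eventually_atTop.mpr ⟨K, fun k hk => ?_⟩
      exact mem_iInter.mp (mem_iInter.mp hx.2 k) hk
    linarith
  obtain ⟨p, hne⟩ := nonempty_interior_of_iUnion_of_closed hSclosed hcover
  obtain ⟨K, b⟩ := p
  obtain ⟨z0, hz0⟩ := hne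
  have hz0' : S (K, b) ∈ 𝓝 z0 := mem_interior_iff_mem_nhds.mp hz0
  rw [nhds_pi, Filter.mem_pi] at hz0'
  obtain ⟨I, hIfin, t, ht, hsub⟩ := hz0'
  have htz : ∀ i, z0 i ∈ t i := by
    intro i
    have h5 := ht i
    rwa [mem_nhds_discrete] at h5
  cases b
  · -- b = false
    set z1 : ℕ → Bool := fun i => if i ∈ I then z0 i else true with hz1
    have hz1mem : z1 ∈ S (K, false) :=
      hsub (Set.mem_pi.mpr (fun i hi => by simp only [hz1, if_pos hi]; exact htz i))
    have hnot : {n | z1 n = true} ∉ U := hhomF K z1 hz1mem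
    apply hnot
    apply Filter.mem_hyperfilter_of_finite_compl
    apply hIfin.subset
    intro n hn
    simp only [mem_compl_iff, mem_setOf_eq, hz1] at hn
    by_contra hnI
    rw [if_neg hnI] at hn
    exact hn rfl
  · -- b = true
    set z1 : ℕ → Bool := fun i => if i ∈ I then z0 i else false with hz1
    have hz1mem : z1 ∈ S (K, true) :=
      hsub (Set.mem_pi.mpr (fun i hi => by simp only [hz1, if_pos hi]; exact htz i))
    have hUz1 : {n | z1 n = true} ∈ U := hhomT K z1 hz1mem
    have hnot : {n | z1 n = true} ∉ U := by
      apply Filter.notMem_hyperfilter_of_finite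
      apply hIfin.subset
      intro n hn
      simp only [mem_setOf_eq, hz1] at hn
      by_contra hnI
      rw [if_neg hnI] at hn
      exact Bool.false_ne_true hn
    exact hnot hUz1


/-- **Theorem 2.5 (Bourgain–Fremlin–Talagrand).** Let `X` be a compact Hausdorff space and
`A ⊆ C(X)` countable and uniformly bounded. Then `A` is sequentially dependent (as a subset
of `ℝ^X`) if and only if every function in the closure of `A` in `ℝ^X` (product topology)
is the pointwise limit of a sequence of elements of `A`. -/
theorem stmt_3 {X : Type*} [TopologicalSpace X] [CompactSpace X] [T2Space X]
    (A : Set C(X, ℝ)) (hA : A.Countable) (hbd : ∃ C : ℝ, ∀ f ∈ A, ‖f‖ ≤ C) :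
    (¬ SeqIndependent ((fun g : C(X, ℝ) => (g : X → ℝ)) '' A)) ↔
      (∀ f : X → ℝ, f ∈ closure ((fun g : C(X, ℝ) => (g : X → ℝ)) '' A) →
        ∃ g : ℕ → C(X, ℝ), (∀ n, g n ∈ A) ∧
          ∀ x, Tendsto (fun n => g n x) atTop (𝓝 (f x))) := by
  classical
  constructor
  · -- the hard (BFT) direction
    intro hni f hf
    by_cases hAne : A.Nonempty
    swap
    · exfalso
      rw [Set.not_nonempty_iff_eq_empty] at hAne
      rw [hAne, Set.image_empty, closure_empty] at hf
      exact hf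
    obtain ⟨a, ha⟩ := hA.exists_eq_range hAne
    have haA : ∀ n, a n ∈ A := fun n => by rw [ha]; exact mem_range_self n
    have himg : ((fun g : C(X, ℝ) => (g : X → ℝ)) '' A)
        = range (fun n => ((a n : C(X, ℝ)) : X → ℝ)) := by
      rw [ha, ← Set.range_comp]
      rfl
    rw [himg] at hf
    rcases isEmpty_or_nonempty X with hX | hX
    · refine ⟨fun _ => a 0, fun _ => haA 0, fun x => (IsEmpty.false x).elim⟩
    have hcne : Filter.NeBot (Filter.comap (fun n => ((a n : C(X, ℝ)) : X → ℝ)) (𝓝 f)) := by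
      rw [Filter.comap_neBot_iff]
      intro t ht
      obtain ⟨g, hg1, hg2⟩ := mem_closure_iff_nhds.mp hf t ht
      obtain ⟨n, hn⟩ := hg2
      refine ⟨n, ?_⟩
      have hn' : ((a n : C(X, ℝ)) : X → ℝ) = g := hn
      rw [hn']
      exact hg1
    set V := Ultrafilter.of (Filter.comap (fun n => ((a n : C(X, ℝ)) : X → ℝ)) (𝓝 f)) with hV
    have htd : Tendsto (fun n => ((a n : C(X, ℝ)) : X → ℝ)) (V : Filter ℕ) (𝓝 f) := by
      intro U hU
      rw [Filter.mem_map]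
      exact (Ultrafilter.of_le _) (Filter.preimage_mem_comap hU)
    have hVx : ∀ x, Tendsto (fun n => a n x) (V : Filter ℕ) (𝓝 (f x)) :=
      tendsto_pi_nhds.mp htd
    obtain ⟨C, hCb⟩ := hbd
    have hC : ∀ (n : ℕ) (x : X), |a n x| ≤ C := by
      intro n x
      have h1 : ‖a n x‖ ≤ ‖a n‖ := (a n).norm_coe_le_norm x
      have h2 : ‖a n‖ ≤ C := hCb _ (haA n)
      rw [Real.norm_eq_abs] at h1
      linarith
    by_cases hcase : ∃ p q : ℚ, p < q ∧ ∃ P : Set X, P.Nonempty ∧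
        ∀ l, (Bof a l ∩ P).Nonempty → {n | XCross a n (Bof a l ∩ P) p q} ∈ V
    · exfalso
      obtain ⟨p, q, hpq, P, hP, hcert⟩ := hcase
      obtain ⟨nsq, hnsq⟩ := case2_patterns a V p q P hP hcert
      apply hni
      refine indep_of_patterns A (fun i => a (nsq i)) (fun i => haA _) p q hpq ?_
      intro N z
      obtain ⟨x, hx⟩ := hnsq N z
      exact ⟨x, fun i hi => ⟨fun h => ((hx i hi).1 h).le, fun h => ((hx i hi).2 h).le⟩⟩
    · push_neg at hcase
      obtain ⟨nsq, hnsq⟩ := case1 a V f hVx C hC hcase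
      exact ⟨fun k => a (nsq k), fun k => haA _, hnsq⟩
  · intro h
    exact back_dir A hbd h
end

section
/- Let T be a complete first-order theory in a countable language L, U a monster model of T (κ-saturated and strongly κ-homogeneous for a sufficiently large cardinal κ), M an elementary substructure of U with |M| < κ, and φ(x;y) a partitioned L-formula that is NIP. Then the evaluation map Eval : conv(𝔽_M^φ) × S_y(M) → [0,1] defined by Eval(g, p) = g(p) is dependent. -/
open FirstOrder Cardinal Set Filter Topology

/-! ### Monster model hypotheses -/

/-- `U` is `κ`-saturated: every set of formulas in finitely many object variables with
parameters from a set of size `< κ` which is finitely satisfiable in `U` is realized in `U`. -/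
def IsSaturated (L : FirstOrder.Language.{0, 0}) (U : Type) [L.Structure U]
    (κ : Cardinal.{0}) : Prop :=
  ∀ (ι : Type), #ι < κ → ∀ (c : ι → U) (n : ℕ) (S : Set (L.Formula (Fin n ⊕ ι))),
    (∀ s : Finset (L.Formula (Fin n ⊕ ι)), ↑s ⊆ S →
      ∃ a : Fin n → U, ∀ ψ ∈ s, ψ.Realize (Sum.elim a c)) →
    ∃ a : Fin n → U, ∀ ψ ∈ S, ψ.Realize (Sum.elim a c)

/-- `U` is strongly `κ`-homogeneous: any two tuples of length `< κ` with the same type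
are conjugate under an automorphism of `U`. -/
def IsStronglyHomogeneous (L : FirstOrder.Language.{0, 0}) (U : Type) [L.Structure U]
    (κ : Cardinal.{0}) : Prop :=
  ∀ (ι : Type), #ι < κ → ∀ a b : ι → U,
    (∀ ψ : L.Formula ι, ψ.Realize a ↔ ψ.Realize b) →
    ∃ σ : U ≃[L] U, ∀ i, σ (a i) = b i

variable {L : FirstOrder.Language.{0, 0}}

/-! ### NIP formulas -/

/-- The partitioned formula `φ(x;y)` has IP in `U`. -/
def FormulaHasIP (U : Type) [L.Structure U] {nx ny : ℕ}
    (φ : L.Formula (Fin nx ⊕ Fin ny)) : Prop :=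
  ∀ n : ℕ, ∃ A : Finset (Fin nx → U), n ≤ A.card ∧
    ∀ K ⊆ A, ∃ bK : Fin ny → U, ∀ c ∈ A, (φ.Realize (Sum.elim c bK) ↔ c ∈ K)

/-- The partitioned formula `φ(x;y)` is NIP in `U`. -/
def FormulaIsNIP (U : Type) [L.Structure U] {nx ny : ℕ}
    (φ : L.Formula (Fin nx ⊕ Fin ny)) : Prop :=
  ¬ FormulaHasIP U φ

/-! ### `φ`-definable sets and local Keisler measures -/

/-- The instance `φ(x;b)` of `φ(x;y)`, as a subset of `U^x`. -/
def phiSet {U : Type} [L.Structure U] {nx ny : ℕ}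
    (φ : L.Formula (Fin nx ⊕ Fin ny)) (b : Fin ny → U) : Set (Fin nx → U) :=
  { a | φ.Realize (Sum.elim a b) }

/-- The Boolean algebra `Def_φ(U)` of subsets of `U^x` generated by the instances
`φ(x;b)`, `b ∈ U^y`. -/
inductive InPhiAlg {U : Type} [L.Structure U] {nx ny : ℕ}
    (φ : L.Formula (Fin nx ⊕ Fin ny)) : Set (Fin nx → U) → Prop
  | basic (b : Fin ny → U) : InPhiAlg φ (phiSet φ b)
  | empty : InPhiAlg φ ∅
  | compl {s : Set (Fin nx → U)} : InPhiAlg φ s → InPhiAlg φ sᶜ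
  | union {s t : Set (Fin nx → U)} : InPhiAlg φ s → InPhiAlg φ t → InPhiAlg φ (s ∪ t)

/-- A finitely additive probability measure on `Def_φ(U)`, i.e. an element of `𝔐_φ(U)`. -/
structure KeislerMeasure (U : Type) [L.Structure U] {nx ny : ℕ}
    (φ : L.Formula (Fin nx ⊕ Fin ny)) where
  toFun : Set (Fin nx → U) → ℝ
  nonneg : ∀ s, InPhiAlg φ s → 0 ≤ toFun s
  total : toFun Set.univ = 1
  additive : ∀ s t, InPhiAlg φ s → InPhiAlg φ t → Disjoint s t →
    toFun (s ∪ t) = toFun s + toFun t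

/-! ### Types over `M` and the Stone space `S_y(M)` -/

/-- `b` and `c` have the same type over `M`. -/
def SameTypeOver {U : Type} [L.Structure U] (M : L.ElementarySubstructure U) {n : ℕ}
    (b c : Fin n → U) : Prop :=
  ∀ (k : ℕ) (ψ : L.Formula (Fin n ⊕ Fin k)) (m : Fin k → M),
    (ψ.Realize (Sum.elim b (fun i => (m i : U))) ↔
      ψ.Realize (Sum.elim c (fun i => (m i : U))))

/-- The setoid of "equality of type over `M`". -/
def typeSetoid {U : Type} [L.Structure U] (M : L.ElementarySubstructure U) (n : ℕ) :
    Setoid (Fin n → U) where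
  r := SameTypeOver M
  iseqv := ⟨fun _ _ _ _ => Iff.rfl, fun h k ψ m => (h k ψ m).symm,
    fun h h' k ψ m => (h k ψ m).trans (h' k ψ m)⟩

/-- The space `S_n(M)` of complete `n`-types over `M` (realized in the monster `U`). -/
def TypeSpace {U : Type} [L.Structure U] (M : L.ElementarySubstructure U) (n : ℕ) : Type :=
  Quotient (typeSetoid M n)

/-- The Stone topology on `S_n(M)`, generated by the sets of types containing a given
formula over `M`. -/
instance typeSpaceTopology {U : Type} [L.Structure U] (M : L.ElementarySubstructure U)
    (n : ℕ) : TopologicalSpace (TypeSpace M n) :=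
  TopologicalSpace.generateFrom
    { S | ∃ (k : ℕ) (ψ : L.Formula (Fin n ⊕ Fin k)) (m : Fin k → M),
        S = { p : TypeSpace M n | ∃ b : Fin n → U,
          Quotient.mk (typeSetoid M n) b = p ∧
            ψ.Realize (Sum.elim b (fun i => (m i : U))) } }

/-- The function `F_a^φ : S_y(M) → ℝ`, the indicator of `φ(a;y) ∈ p` for `a ∈ M^x`. -/
noncomputable def FunF {U : Type} [L.Structure U] {nx ny : ℕ}
    (φ : L.Formula (Fin nx ⊕ Fin ny)) (M : L.ElementarySubstructure U)
    (a : Fin nx → M) (p : TypeSpace M ny) : ℝ :=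
  Set.indicator
    { q : TypeSpace M ny | ∃ b : Fin ny → U, Quotient.mk (typeSetoid M ny) b = q ∧
        φ.Realize (Sum.elim (fun i => (a i : U)) b) } (fun _ => 1) p

/-- The family `𝔽_M^φ = {F_a^φ : a ∈ M^x}` of functions on `S_y(M)`. -/
def FamilyF {U : Type} [L.Structure U] {nx ny : ℕ}
    (φ : L.Formula (Fin nx ⊕ Fin ny)) (M : L.ElementarySubstructure U) :
    Set (TypeSpace M ny → ℝ) :=
  Set.range (fun a : Fin nx → M => FunF φ M a)

/-- The function `F_μ^φ : S_y(M) → ℝ`, `p ↦ μ(φ(x;b))` for `b ⊨ p` (well defined when `μ`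
is `φ`-invariant over `M`). -/
noncomputable def FunMu {U : Type} [L.Structure U] {nx ny : ℕ}
    (φ : L.Formula (Fin nx ⊕ Fin ny)) (M : L.ElementarySubstructure U)
    (μ : KeislerMeasure U φ) (p : TypeSpace M ny) : ℝ :=
  μ.toFun (phiSet φ (Quotient.out p))

/-! ### Properties of local Keisler measures -/

/-- `μ` is `φ`-invariant over `M`. -/
def PhiInvariant {U : Type} [L.Structure U] {nx ny : ℕ}
    (φ : L.Formula (Fin nx ⊕ Fin ny)) (M : L.ElementarySubstructure U)
    (μ : KeislerMeasure U φ) : Prop :=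
  ∀ b c : Fin ny → U, SameTypeOver M b c → μ.toFun (phiSet φ b) = μ.toFun (phiSet φ c)

/-- `μ` is `M`-invariant: automorphisms of `U` fixing `M` pointwise preserve the measure of
every set in `Def_φ(U)`. -/
def MInvariant {U : Type} [L.Structure U] {nx ny : ℕ}
    (φ : L.Formula (Fin nx ⊕ Fin ny)) (M : L.ElementarySubstructure U)
    (μ : KeislerMeasure U φ) : Prop :=
  ∀ σ : U ≃[L] U, (∀ m : M, σ (m : U) = (m : U)) → ∀ s : Set (Fin nx → U), InPhiAlg φ s →
    μ.toFun ((fun a : Fin nx → U => (σ : U → U) ∘ a) '' s) = μ.toFun s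

/-- `μ` is `φ`-definable over `M` (Definition 4.3(i)). -/
def PhiDefinable {U : Type} [L.Structure U] {nx ny : ℕ}
    (φ : L.Formula (Fin nx ⊕ Fin ny)) (M : L.ElementarySubstructure U)
    (μ : KeislerMeasure U φ) : Prop :=
  ∀ ε : ℝ, 0 < ε → ∃ (m k : ℕ) (ψ : Fin m → L.Formula (Fin ny ⊕ Fin k)) (c : Fin k → M),
    (∀ b : Fin ny → U, ∃! i : Fin m, (ψ i).Realize (Sum.elim b (fun j => (c j : U)))) ∧
    ∀ i : Fin m, ∀ e e' : Fin ny → U,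
      (ψ i).Realize (Sum.elim e (fun j => (c j : U))) →
      (ψ i).Realize (Sum.elim e' (fun j => (c j : U))) →
      |μ.toFun (phiSet φ e) - μ.toFun (phiSet φ e')| < ε

/-- `μ` is finitely satisfiable over `M`: every `φ`-formula of positive measure has a
realization in `M`. -/
def FinSat {U : Type} [L.Structure U] {nx ny : ℕ}
    (φ : L.Formula (Fin nx ⊕ Fin ny)) (M : L.ElementarySubstructure U)
    (μ : KeislerMeasure U φ) : Prop :=
  ∀ s : Set (Fin nx → U), InPhiAlg φ s → 0 < μ.toFun s →
    ∃ a : Fin nx → M, (fun i => (a i : U)) ∈ s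

/-- `μ` is `φ`-generically stable over `M` (Definition 4.3(iii)). -/
def PhiGenericallyStable {U : Type} [L.Structure U] {nx ny : ℕ}
    (φ : L.Formula (Fin nx ⊕ Fin ny)) (M : L.ElementarySubstructure U)
    (μ : KeislerMeasure U φ) : Prop :=
  PhiDefinable φ M μ ∧ FinSat φ M μ

/-! ### The algebra `Δ_φ` of partitioned formulas and full generic stability -/

/-- The family `Δ_φ` of Boolean combinations `θ(x; y_1, ..., y_k)` of the formulas
`φ(x;y_i)`, viewed as set-valued maps on tuples of parameters. -/
inductive InDeltaPhi {U : Type} [L.Structure U] {nx ny : ℕ}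
    (φ : L.Formula (Fin nx ⊕ Fin ny)) :
    (k : ℕ) → ((Fin k → Fin ny → U) → Set (Fin nx → U)) → Prop
  | inst (k : ℕ) (j : Fin k) : InDeltaPhi φ k (fun bs => phiSet φ (bs j))
  | empty (k : ℕ) : InDeltaPhi φ k (fun _ => ∅)
  | compl {k : ℕ} {G} : InDeltaPhi φ k G → InDeltaPhi φ k (fun bs => (G bs)ᶜ)
  | union {k : ℕ} {G H} : InDeltaPhi φ k G → InDeltaPhi φ k H →
      InDeltaPhi φ k (fun bs => G bs ∪ H bs)

/-- `μ` is definable over `M` (Definition 4.11): for every `θ(x;ȳ) ∈ Δ_φ` and `ε > 0` there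
is a partition of `U^ȳ` into `M`-definable pieces on which `μ(θ(x;·))` varies less than `ε`. -/
def DefinableOver {U : Type} [L.Structure U] {nx ny : ℕ}
    (φ : L.Formula (Fin nx ⊕ Fin ny)) (M : L.ElementarySubstructure U)
    (μ : KeislerMeasure U φ) : Prop :=
  ∀ (k : ℕ) (G : (Fin k → Fin ny → U) → Set (Fin nx → U)), InDeltaPhi φ k G →
    ∀ ε : ℝ, 0 < ε →
      ∃ (m j : ℕ) (ρ : Fin m → L.Formula ((Fin k × Fin ny) ⊕ Fin j)) (c : Fin j → M),
        (∀ bs : Fin k → Fin ny → U, ∃! i : Fin m,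
          (ρ i).Realize (Sum.elim (fun q => bs q.1 q.2) (fun t => (c t : U)))) ∧
        ∀ i : Fin m, ∀ e e' : Fin k → Fin ny → U,
          (ρ i).Realize (Sum.elim (fun q => e q.1 q.2) (fun t => (c t : U))) →
          (ρ i).Realize (Sum.elim (fun q => e' q.1 q.2) (fun t => (c t : U))) →
          |μ.toFun (G e) - μ.toFun (G e')| < ε

/-- `μ` is generically stable over `M` (Definition 4.11). -/
def GenericallyStable {U : Type} [L.Structure U] {nx ny : ℕ}
    (φ : L.Formula (Fin nx ⊕ Fin ny)) (M : L.ElementarySubstructure U)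
    (μ : KeislerMeasure U φ) : Prop :=
  DefinableOver φ M μ ∧ FinSat φ M μ

/-- The average measure `Av(ā)` of the finite sequence `ā = (a_1, ..., a_n)`. -/
noncomputable def Av {α : Type*} {n : ℕ} (a : Fin n → α) (s : Set α) : ℝ :=
  (∑ i : Fin n, Set.indicator s (fun _ => (1 : ℝ)) (a i)) / n

/-- `μ` is finitely approximable over `M` (Definition 4.12). -/
def FinApprox {U : Type} [L.Structure U] {nx ny : ℕ}
    (φ : L.Formula (Fin nx ⊕ Fin ny)) (M : L.ElementarySubstructure U)
    (μ : KeislerMeasure U φ) : Prop :=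
  ∀ (k : ℕ) (G : (Fin k → Fin ny → U) → Set (Fin nx → U)), InDeltaPhi φ k G →
    ∀ ε : ℝ, 0 < ε → ∃ (n : ℕ), 0 < n ∧ ∃ a : Fin n → (Fin nx → M),
      ∀ bs : Fin k → Fin ny → U,
        |μ.toFun (G bs) - Av (fun i => fun q => ((a i q : U))) (G bs)| < ε

/-! ### Convexity and dependence notions -/

/-- The set of all finite rational convex combinations of elements of `A`. -/
def ratConv {E : Type*} [AddCommMonoid E] [Module ℝ E] (A : Set E) : Set E :=
  { z | ∃ (n : ℕ) (r : Fin n → ℚ) (v : Fin n → E),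
      (∀ i, 0 < r i) ∧ (∑ i, ((r i : ℝ))) = 1 ∧ (∀ i, v i ∈ A) ∧ z = ∑ i, ((r i : ℝ)) • v i }

/-- A two-variable map `g : X × Y → ℝ` is `(r,ε)`-independent if for every `n` there is a
set `A ⊆ X` with `|A| > n` which `g` `(r,ε)`-shatters; `g` is independent if it is
`(r,ε)`-independent for some `r ∈ (0,1)` and `ε > 0`, and dependent otherwise. -/
def MapIndependent {X Y : Type*} (g : X → Y → ℝ) : Prop :=
  ∃ r : ℝ, r ∈ Set.Ioo (0 : ℝ) 1 ∧ ∃ ε : ℝ, 0 < ε ∧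
    ∀ n : ℕ, ∃ A : Finset X, n < A.card ∧
      ∀ K ⊆ A, ∃ b : Y, ∀ a ∈ A, (g a b ≤ r ↔ a ∈ K) ∧ (r + ε ≤ g a b ↔ a ∉ K)

section ProbCore
open Finset


section Prob
variable {ι : Type*} [Fintype ι] [DecidableEq ι]

lemma indep_fact {m : ℕ} (w Z : ι → ℝ) (c : Fin m → ℕ) :
    ∑ f : Fin m → ι, (∏ i, w (f i)) * ∏ i, (Z (f i)) ^ (c i)
      = ∏ i : Fin m, (∑ j, w j * Z j ^ (c i)) := by
  rw [Fintype.prod_sum (fun i (j : ι) => w j * Z j ^ (c i))]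
  congr 1; funext f
  rw [← Finset.prod_mul_distrib]

lemma prod_comp_univ {γ δ : Type*} [Fintype γ] [DecidableEq γ] [Fintype δ] [DecidableEq δ]
    (F : γ → ℝ) (g : δ → γ) :
    ∏ l, F (g l) = ∏ b : γ, F b ^ (Finset.filter (fun l => g l = b) univ).card := by
  rw [Finset.prod_comp]
  apply Finset.prod_subset (subset_univ _)
  intro b _ hb
  have : (Finset.filter (fun l => g l = b) univ).card = 0 := by
    rw [Finset.card_eq_zero]
    ext l
    simp only [Finset.mem_filter, Finset.mem_univ, true_and, Finset.notMem_empty, iff_false]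
    intro h
    exact hb (h ▸ mem_image_of_mem g (Finset.mem_univ l))
  simp [this]
end Prob

section Count

set_option maxHeartbeats 1000000 in
lemma count_good {m k : ℕ} (hk : 1 ≤ k) (hkm : k ≤ m) :
    Finset.card (Finset.filter (fun g : Fin (2*k) → Fin m => ∀ i, Finset.card (Finset.filter (fun l => g l = i) univ) ≠ 1) univ)
      ≤ m ^ k * k ^ (2*k) := by
  classical
  have hku : k ≤ Finset.card (univ : Finset (Fin m)) := by simpa using hkm
  have hsub : Finset.filter (fun g : Fin (2*k) → Fin m => ∀ i, Finset.card (Finset.filter (fun l => g l = i) univ) ≠ 1) univ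
      ⊆ (Finset.powersetCard k (univ : Finset (Fin m))).biUnion
          (fun s => Finset.filter (fun g : Fin (2*k) → Fin m => ∀ l, g l ∈ s) univ) := by
    intro g hg
    simp only [Finset.mem_filter, Finset.mem_univ, true_and] at hg
    have himg : Finset.card (Finset.image g univ) ≤ k := by
      have hA : 2 * Finset.card (Finset.image g univ) ≤ 2 * k := by
        calc 2 * Finset.card (Finset.image g univ)
            = ∑ _b ∈ Finset.image g univ, 2 := by rw [Finset.sum_const]; ring
          _ ≤ ∑ b ∈ Finset.image g univ, Finset.card (Finset.filter (fun l => g l = b) univ) := by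
              apply Finset.sum_le_sum
              intro b hb
              obtain ⟨l, _, hl⟩ := Finset.mem_image.1 hb
              have hone : 1 ≤ Finset.card (Finset.filter (fun l => g l = b) univ) := by
                rw [Nat.one_le_iff_ne_zero, ← Nat.pos_iff_ne_zero, Finset.card_pos]
                exact ⟨l, by simp [hl]⟩
              have := hg b
              omega
          _ = Finset.card (univ : Finset (Fin (2*k))) := (Finset.card_eq_sum_card_image g univ).symm
          _ = 2 * k := by simp
      omega
    obtain ⟨s, hs1, _, hs3⟩ := Finset.exists_subsuperset_card_eq (Finset.subset_univ _) himg hku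
    refine Finset.mem_biUnion.2 ⟨s, ?_, ?_⟩
    · exact Finset.mem_powersetCard.2 ⟨Finset.subset_univ _, hs3⟩
    · simp only [Finset.mem_filter, Finset.mem_univ, true_and]
      intro l; exact hs1 (Finset.mem_image_of_mem g (Finset.mem_univ l))
  have h1 := le_trans (Finset.card_le_card hsub) (Finset.card_biUnion_le (s := Finset.powersetCard k (univ : Finset (Fin m)))
      (t := fun s => Finset.filter (fun g : Fin (2*k) → Fin m => ∀ l, g l ∈ s) univ))
  have h2 : ∀ s ∈ Finset.powersetCard k (univ : Finset (Fin m)),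
      Finset.card (Finset.filter (fun g : Fin (2*k) → Fin m => ∀ l, g l ∈ s) univ) ≤ k ^ (2*k) := by
    intro s hs
    obtain ⟨_, hscard⟩ := Finset.mem_powersetCard.1 hs
    have hsne : s.Nonempty := Finset.card_pos.mp (by rw [hscard]; exact hk)
    obtain ⟨s0, hs0⟩ := hsne
    have hinj : Finset.card (Finset.filter (fun g : Fin (2*k) → Fin m => ∀ l, g l ∈ s) univ)
        ≤ Finset.card (univ : Finset (Fin (2*k) → {x // x ∈ s})) := by
      apply Finset.card_le_card_of_injOn
        (fun g l => if h : g l ∈ s then (⟨g l, h⟩ : {x // x ∈ s}) else ⟨s0, hs0⟩)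
        (fun _ _ => Finset.mem_univ _)
      intro g1 hg1 g2 hg2 heq
      simp only [Finset.mem_coe, Finset.mem_filter, Finset.mem_univ, true_and] at hg1 hg2
      funext l
      have hcf := congrFun heq l
      simp only [dif_pos (hg1 l), dif_pos (hg2 l), Subtype.mk.injEq] at hcf
      exact hcf
    refine hinj.trans ?_
    rw [Finset.card_univ, Fintype.card_fun]
    simp [Fintype.card_coe, hscard]
  have h3 : (∑ _s ∈ Finset.powersetCard k (univ : Finset (Fin m)), k ^ (2*k))
      = (m.choose k) * k ^ (2*k) := by
    rw [Finset.sum_const, Finset.card_powersetCard, smul_eq_mul]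
    simp
  exact le_trans h1 (le_trans (le_trans (Finset.sum_le_sum h2) (le_of_eq h3))
    (Nat.mul_le_mul_right _ (Nat.choose_le_pow m k)))

end Count

section Prob2
variable {ι : Type*} [Fintype ι] [DecidableEq ι]

lemma factor_abs_le_one (w Z : ι → ℝ) (hw0 : ∀ i, 0 ≤ w i) (hw1 : ∑ i, w i = 1)
    (hZ : ∀ i, |Z i| ≤ 1) (n : ℕ) : |∑ j, w j * Z j ^ n| ≤ 1 := by
  refine le_trans (Finset.abs_sum_le_sum_abs _ _) ?_
  rw [← hw1]
  apply Finset.sum_le_sum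
  intro j _
  rw [abs_mul, abs_of_nonneg (hw0 j), abs_pow]
  have h1 : |Z j| ^ n ≤ 1 := pow_le_one₀ (abs_nonneg _) (hZ j)
  nlinarith [hw0 j, abs_nonneg (Z j), pow_nonneg (abs_nonneg (Z j)) n]

set_option maxHeartbeats 1000000 in
lemma moment_bound {m k : ℕ} (hk : 1 ≤ k) (hkm : k ≤ m) (w Z : ι → ℝ)
    (hw0 : ∀ i, 0 ≤ w i) (hw1 : ∑ i, w i = 1) (hZ : ∀ i, |Z i| ≤ 1)
    (hmean : ∑ j, w j * Z j = 0) :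
    ∑ f : Fin m → ι, (∏ i, w (f i)) * (∑ i, Z (f i)) ^ (2 * k)
      ≤ (m : ℝ) ^ k * (k : ℝ) ^ (2 * k) := by
  classical
  have hexp : ∀ f : Fin m → ι, (∑ i, Z (f i)) ^ (2*k)
      = ∑ g : Fin (2*k) → Fin m, ∏ l, Z (f (g l)) :=
    fun f => Fintype.sum_pow (fun i => Z (f i)) (2*k)
  have hswap : ∑ f : Fin m → ι, (∏ i, w (f i)) * (∑ i, Z (f i)) ^ (2*k)
      = ∑ g : Fin (2*k) → Fin m, ∑ f : Fin m → ι, (∏ i, w (f i)) * ∏ l, Z (f (g l)) := by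
    simp_rw [hexp, Finset.mul_sum]
    rw [Finset.sum_comm]
  have hcnt : ∀ (g : Fin (2*k) → Fin m) (f : Fin m → ι),
      ∏ l, Z (f (g l)) = ∏ i : Fin m, (Z (f i)) ^ Finset.card (Finset.filter (fun l => g l = i) univ) :=
    fun g f => prod_comp_univ (fun b => Z (f b)) g
  have hterm : ∀ g : Fin (2*k) → Fin m,
      ∑ f : Fin m → ι, (∏ i, w (f i)) * ∏ l, Z (f (g l))
        = ∏ i : Fin m, (∑ j, w j * Z j ^ Finset.card (Finset.filter (fun l => g l = i) univ)) := by
    intro g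
    simp_rw [hcnt g]
    exact indep_fact w Z _
  rw [hswap]
  simp_rw [hterm]
  have hzero : ∀ g : Fin (2*k) → Fin m, (∃ i, Finset.card (Finset.filter (fun l => g l = i) univ) = 1) →
      ∏ i : Fin m, (∑ j, w j * Z j ^ Finset.card (Finset.filter (fun l => g l = i) univ)) = 0 := by
    rintro g ⟨i, hi⟩
    apply Finset.prod_eq_zero (Finset.mem_univ i)
    rw [hi]
    simpa using hmean
  have hone : ∀ g : Fin (2*k) → Fin m,
      |∏ i : Fin m, (∑ j, w j * Z j ^ Finset.card (Finset.filter (fun l => g l = i) univ))| ≤ 1 := by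
    intro g
    rw [Finset.abs_prod]
    apply Finset.prod_le_one (fun i _ => abs_nonneg _)
    intro i _
    exact factor_abs_le_one w Z hw0 hw1 hZ _
  have hsplit : (∑ g : Fin (2*k) → Fin m,
        ∏ i : Fin m, (∑ j, w j * Z j ^ Finset.card (Finset.filter (fun l => g l = i) univ)))
      = ∑ g ∈ Finset.filter (fun g : Fin (2*k) → Fin m =>
            ∀ i, Finset.card (Finset.filter (fun l => g l = i) univ) ≠ 1) univ,
          ∏ i : Fin m, (∑ j, w j * Z j ^ Finset.card (Finset.filter (fun l => g l = i) univ)) := by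
    rw [← Finset.sum_filter_add_sum_filter_not univ (fun g : Fin (2*k) → Fin m =>
      ∀ i, Finset.card (Finset.filter (fun l => g l = i) univ) ≠ 1)]
    have hnz : ∑ g ∈ Finset.filter (fun g : Fin (2*k) → Fin m =>
          ¬ ∀ i, Finset.card (Finset.filter (fun l => g l = i) univ) ≠ 1) univ,
        ∏ i : Fin m, (∑ j, w j * Z j ^ Finset.card (Finset.filter (fun l => g l = i) univ)) = 0 := by
      apply Finset.sum_eq_zero; intro g hg
      simp only [Finset.mem_filter, not_forall, not_not] at hg
      exact hzero g hg.2
    rw [hnz, add_zero]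
  rw [hsplit]
  have hb1 : ∑ g ∈ Finset.filter (fun g : Fin (2*k) → Fin m =>
        ∀ i, Finset.card (Finset.filter (fun l => g l = i) univ) ≠ 1) univ,
      ∏ i : Fin m, (∑ j, w j * Z j ^ Finset.card (Finset.filter (fun l => g l = i) univ))
      ≤ ∑ _g ∈ Finset.filter (fun g : Fin (2*k) → Fin m =>
        ∀ i, Finset.card (Finset.filter (fun l => g l = i) univ) ≠ 1) univ, (1:ℝ) := by
    apply Finset.sum_le_sum; intro g _
    exact le_trans (le_abs_self _) (hone g)
  refine le_trans hb1 ?_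
  rw [Finset.sum_const, nsmul_eq_mul, mul_one]
  have := count_good hk hkm
  calc (Finset.card (Finset.filter (fun g : Fin (2*k) → Fin m =>
        ∀ i, Finset.card (Finset.filter (fun l => g l = i) univ) ≠ 1) univ) : ℝ)
      ≤ ((m ^ k * k ^ (2*k) : ℕ) : ℝ) := Nat.cast_le.mpr this
    _ = (m : ℝ) ^ k * (k : ℝ) ^ (2*k) := by push_cast; ring

end Prob2

section Sample
variable {ι β : Type*} [Fintype ι] [DecidableEq ι]

set_option maxHeartbeats 1000000 in
lemma exists_good_sample (w : ι → ℝ) (hw0 : ∀ i, 0 ≤ w i) (hw1 : ∑ i, w i = 1)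
    (h : ι → β → ℝ) (hh0 : ∀ i b, 0 ≤ h i b) (hh1 : ∀ i b, h i b ≤ 1)
    (B : Finset β) (ε' : ℝ) (hε' : 0 < ε') {m k : ℕ} (hk : 1 ≤ k) (hkm : k ≤ m)
    (hcond : (B.card : ℝ) * ((m : ℝ) ^ k * (k : ℝ) ^ (2*k)) < ((m : ℝ) * ε') ^ (2*k)) :
    ∃ f : Fin m → ι, ∀ b ∈ B,
      |(∑ i : Fin m, h (f i) b) - (m : ℝ) * (∑ j, w j * h j b)| < (m : ℝ) * ε' := by
  classical
  by_contra hcon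
  push_neg at hcon
  -- weights of the product space
  set W : (Fin m → ι) → ℝ := fun f => ∏ i, w (f i) with hW
  have hW0 : ∀ f, 0 ≤ W f := fun f => Finset.prod_nonneg (fun i _ => hw0 (f i))
  have hWsum : ∑ f : Fin m → ι, W f = 1 := by
    rw [hW]
    rw [← Fintype.prod_sum (fun _ (j : ι) => w j)]
    simp [hw1]
  -- centered variables
  have key : ∀ b ∈ B, ∑ f : Fin m → ι, W f *
      (if (m : ℝ) * ε' ≤ |(∑ i : Fin m, h (f i) b) - (m : ℝ) * (∑ j, w j * h j b)| then (1:ℝ) else 0)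
        ≤ ((m : ℝ) ^ k * (k : ℝ) ^ (2*k)) / ((m : ℝ) * ε') ^ (2*k) := by
    intro b _
    set μ : ℝ := ∑ j, w j * h j b with hμ
    have hμ0 : 0 ≤ μ := Finset.sum_nonneg (fun j _ => mul_nonneg (hw0 j) (hh0 j b))
    have hμ1 : μ ≤ 1 := by
      rw [hμ, ← hw1]
      apply Finset.sum_le_sum
      intro j _
      nlinarith [hw0 j, hh0 j b, hh1 j b]
    set Z : ι → ℝ := fun j => h j b - μ with hZdef
    have hZ : ∀ j, |Z j| ≤ 1 := by
      intro j
      rw [abs_le]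
      constructor <;> simp only [hZdef] <;> nlinarith [hh0 j b, hh1 j b]
    have hmean : ∑ j, w j * Z j = 0 := by
      simp only [hZdef, mul_sub, Finset.sum_sub_distrib, ← Finset.sum_mul, hw1, one_mul, hμ]
      ring
    have hmom := moment_bound hk hkm w Z hw0 hw1 hZ hmean
    have hrw : ∀ f : Fin m → ι, (∑ i : Fin m, Z (f i))
        = (∑ i : Fin m, h (f i) b) - (m : ℝ) * μ := by
      intro f
      simp only [hZdef, Finset.sum_sub_distrib, Finset.sum_const, Finset.card_univ,
        Fintype.card_fin, nsmul_eq_mul]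
    -- Markov
    have hm0 : (0:ℝ) < m := by
      have : 0 < m := lt_of_lt_of_le hk hkm
      exact_mod_cast this
    have hD : (0:ℝ) < ((m : ℝ) * ε') ^ (2*k) := pow_pos (mul_pos hm0 hε') _
    have hmark : ∀ f : Fin m → ι,
        W f * (if (m : ℝ) * ε' ≤ |(∑ i : Fin m, h (f i) b) - (m : ℝ) * μ| then (1:ℝ) else 0)
          ≤ W f * ((∑ i : Fin m, Z (f i)) ^ (2*k) / ((m : ℝ) * ε') ^ (2*k)) := by
      intro f
      apply mul_le_mul_of_nonneg_left _ (hW0 f)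
      split_ifs with hif
      · rw [le_div_iff₀ hD]
        rw [one_mul, hrw f]
        calc ((m:ℝ) * ε') ^ (2*k) ≤ |(∑ i : Fin m, h (f i) b) - (m : ℝ) * μ| ^ (2*k) := by
              apply pow_le_pow_left₀ (by positivity) hif
          _ = ((∑ i : Fin m, h (f i) b) - (m : ℝ) * μ) ^ (2*k) := by
              rw [← abs_pow]
              rw [abs_of_nonneg (even_two_mul k |>.pow_nonneg _)]
      · exact div_nonneg (even_two_mul k |>.pow_nonneg _) hD.le
    calc ∑ f : Fin m → ι, W f *
          (if (m : ℝ) * ε' ≤ |(∑ i : Fin m, h (f i) b) - (m : ℝ) * μ| then (1:ℝ) else 0)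
        ≤ ∑ f : Fin m → ι, W f * ((∑ i : Fin m, Z (f i)) ^ (2*k) / ((m : ℝ) * ε') ^ (2*k)) :=
          Finset.sum_le_sum (fun f _ => hmark f)
      _ = (∑ f : Fin m → ι, W f * (∑ i : Fin m, Z (f i)) ^ (2*k)) / ((m : ℝ) * ε') ^ (2*k) := by
          rw [Finset.sum_div]
          congr 1; funext f; ring
      _ ≤ ((m : ℝ) ^ k * (k : ℝ) ^ (2*k)) / ((m : ℝ) * ε') ^ (2*k) :=
          (div_le_div_iff_of_pos_right hD).mpr hmom
  -- union bound
  have hm0 : (0:ℝ) < m := by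
    have : 0 < m := lt_of_lt_of_le hk hkm
    exact_mod_cast this
  have hD : (0:ℝ) < ((m : ℝ) * ε') ^ (2*k) := pow_pos (mul_pos hm0 hε') _
  have h1le : ∀ f : Fin m → ι, (1:ℝ) ≤ ∑ b ∈ B,
      (if (m : ℝ) * ε' ≤ |(∑ i : Fin m, h (f i) b) - (m : ℝ) * (∑ j, w j * h j b)|
        then (1:ℝ) else 0) := by
    intro f
    obtain ⟨b, hbB, hb⟩ := hcon f
    refine le_trans ?_ (Finset.single_le_sum (fun b _ => by positivity) hbB)
    rw [if_pos hb]
  have htot : (1:ℝ) ≤ ∑ b ∈ B, ∑ f : Fin m → ι, W f *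
      (if (m : ℝ) * ε' ≤ |(∑ i : Fin m, h (f i) b) - (m : ℝ) * (∑ j, w j * h j b)|
        then (1:ℝ) else 0) := by
    calc (1:ℝ) = ∑ f : Fin m → ι, W f := hWsum.symm
      _ ≤ ∑ f : Fin m → ι, W f * ∑ b ∈ B,
          (if (m : ℝ) * ε' ≤ |(∑ i : Fin m, h (f i) b) - (m : ℝ) * (∑ j, w j * h j b)|
            then (1:ℝ) else 0) := by
          apply Finset.sum_le_sum
          intro f _
          nth_rewrite 1 [← mul_one (W f)]
          exact mul_le_mul_of_nonneg_left (h1le f) (hW0 f)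
      _ = ∑ b ∈ B, ∑ f : Fin m → ι, W f *
          (if (m : ℝ) * ε' ≤ |(∑ i : Fin m, h (f i) b) - (m : ℝ) * (∑ j, w j * h j b)|
            then (1:ℝ) else 0) := by
          simp_rw [Finset.mul_sum]
          rw [Finset.sum_comm]
  have hfin : ∑ b ∈ B, ∑ f : Fin m → ι, W f *
      (if (m : ℝ) * ε' ≤ |(∑ i : Fin m, h (f i) b) - (m : ℝ) * (∑ j, w j * h j b)|
        then (1:ℝ) else 0)
      ≤ (B.card : ℝ) * (((m : ℝ) ^ k * (k : ℝ) ^ (2*k)) / ((m : ℝ) * ε') ^ (2*k)) := by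
    refine le_trans (Finset.sum_le_sum key) ?_
    rw [Finset.sum_const, nsmul_eq_mul]
  have hlast : (B.card : ℝ) * (((m : ℝ) ^ k * (k : ℝ) ^ (2*k)) / ((m : ℝ) * ε') ^ (2*k)) < 1 := by
    rw [mul_div_assoc'] at *
    rw [div_lt_one hD]
    exact hcond
  linarith
end Sample

end ProbCore

section AuxMT
variable {U : Type} [L.Structure U] {nx ny : ℕ}

lemma funF_mem_iff (φ : L.Formula (Fin nx ⊕ Fin ny)) (M : L.ElementarySubstructure U)
    (a : Fin nx → M) (b : Fin ny → U) :
    ((Quotient.mk (typeSetoid M ny) b) ∈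
      { q : TypeSpace M ny | ∃ b' : Fin ny → U, Quotient.mk (typeSetoid M ny) b' = q ∧
        φ.Realize (Sum.elim (fun i => (a i : U)) b') })
      ↔ φ.Realize (Sum.elim (fun i => (a i : U)) b) := by
  constructor
  · rintro ⟨b', hb', hφ⟩
    have hsame : SameTypeOver M b' b := Quotient.exact hb'
    have hkey := hsame nx (φ.relabel (Sum.elim Sum.inr Sum.inl)) a
    rw [FirstOrder.Language.Formula.realize_relabel, FirstOrder.Language.Formula.realize_relabel]
      at hkey
    have he1 : (Sum.elim b' (fun i => ((a i : U))) ∘ Sum.elim Sum.inr Sum.inl)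
        = Sum.elim (fun i => ((a i : U))) b' := by
      funext x; cases x <;> rfl
    have he2 : (Sum.elim b (fun i => ((a i : U))) ∘ Sum.elim Sum.inr Sum.inl)
        = Sum.elim (fun i => ((a i : U))) b := by
      funext x; cases x <;> rfl
    rw [he1, he2] at hkey
    exact hkey.mp hφ
  · intro hφ
    exact ⟨b, rfl, hφ⟩

lemma funF_eval_one (φ : L.Formula (Fin nx ⊕ Fin ny)) (M : L.ElementarySubstructure U)
    (a : Fin nx → M) (b : Fin ny → U) (h : φ.Realize (Sum.elim (fun i => (a i : U)) b)) :
    FunF φ M a (Quotient.mk (typeSetoid M ny) b) = 1 :=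
  Set.indicator_of_mem ((funF_mem_iff φ M a b).mpr h) _

lemma funF_eval_zero (φ : L.Formula (Fin nx ⊕ Fin ny)) (M : L.ElementarySubstructure U)
    (a : Fin nx → M) (b : Fin ny → U) (h : ¬ φ.Realize (Sum.elim (fun i => (a i : U)) b)) :
    FunF φ M a (Quotient.mk (typeSetoid M ny) b) = 0 :=
  Set.indicator_of_notMem (fun hc => h ((funF_mem_iff φ M a b).mp hc)) _

lemma funF_nonneg (φ : L.Formula (Fin nx ⊕ Fin ny)) (M : L.ElementarySubstructure U)
    (a : Fin nx → M) (p : TypeSpace M ny) : 0 ≤ FunF φ M a p := by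
  unfold FunF
  apply Set.indicator_nonneg
  intro q _
  norm_num

lemma funF_le_one (φ : L.Formula (Fin nx ⊕ Fin ny)) (M : L.ElementarySubstructure U)
    (a : Fin nx → M) (p : TypeSpace M ny) : FunF φ M a p ≤ 1 := by
  classical
  unfold FunF
  rw [Set.indicator_apply]
  split_ifs <;> norm_num

lemma convexHull_rep (φ : L.Formula (Fin nx ⊕ Fin ny)) (M : L.ElementarySubstructure U)
    (g : TypeSpace M ny → ℝ) (hg : g ∈ convexHull ℝ (FamilyF φ M)) :
    ∃ (n : ℕ) (w : Fin n → ℝ) (a : Fin n → (Fin nx → M)),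
      0 < n ∧ (∀ i, 0 ≤ w i) ∧ (∑ i, w i) = 1 ∧
        ∀ p, g p = ∑ i, w i * FunF φ M (a i) p := by
  classical
  rw [convexHull_eq] at hg
  obtain ⟨ι, t, w, z, hw0, hw1, hz, hgc⟩ := hg
  have hrange : ∀ i ∈ t, ∃ a : Fin nx → M, FunF φ M a = z i := fun i hi => hz i hi
  choose aa haa using hrange
  have htne : t.Nonempty := by
    rcases Finset.eq_empty_or_nonempty t with h | h
    · rw [h] at hw1; simp at hw1
    · exact h
  have hnpos : 0 < t.card := Finset.card_pos.mpr htne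
  set e := t.equivFin with he
  refine ⟨t.card, fun i => w ((e.symm i) : ι), fun i => aa ((e.symm i) : ι) (e.symm i).2,
    hnpos, fun i => hw0 _ (e.symm i).2, ?_, ?_⟩
  · rw [← hw1, ← Finset.sum_attach t w]
    exact Equiv.sum_comp e.symm (fun j : {x // x ∈ t} => w (j : ι))
  · intro p
    have hgs : g = ∑ i ∈ t, w i • z i := by
      rw [← Finset.centerMass_eq_of_sum_1 t z hw1, hgc]
    rw [hgs, Finset.sum_apply]
    have hstep : ∑ i ∈ t, (w i • z i) p = ∑ j ∈ t.attach, w (j : ι) * z (j : ι) p := by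
      rw [Finset.sum_attach t (fun i => w i * z i p)]
      simp [Pi.smul_apply, smul_eq_mul]
    rw [hstep, ← Finset.univ_eq_attach,
      ← Equiv.sum_comp e.symm (fun j : {x // x ∈ t} => w (j : ι) * z (j : ι) p)]
    congr 1
    funext i
    rw [haa _ (e.symm i).2]

end AuxMT

/-- **Corollary 3.13.** If `φ(x;y)` is NIP, then the evaluation map
`Eval : conv(𝔽_M^φ) × S_y(M) → [0,1]`, `Eval(g,p) = g(p)`, is dependent. -/
theorem stmt_6
    {L : FirstOrder.Language.{0, 0}} (T : L.Theory) (hT : T.IsComplete)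
    (hL : L.card ≤ Cardinal.aleph0)
    {U : Type} [L.Structure U] [Nonempty U] (hUT : T.Model U)
    (κ : Cardinal.{0}) (hκ : Cardinal.aleph0 < κ) (hreg : κ.IsRegular)
    (hsat : IsSaturated L U κ) (hhom : IsStronglyHomogeneous L U κ)
    (M : L.ElementarySubstructure U) (hM : #M < κ)
    {nx ny : ℕ} (φ : L.Formula (Fin nx ⊕ Fin ny))    (hNIP : FormulaIsNIP U φ) :
    ¬ MapIndependent
      (fun (g : ↥(convexHull ℝ (FamilyF φ M))) (p : TypeSpace M ny) => (g : _ → ℝ) p) := by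
  intro hMI
  classical
  obtain ⟨r, _hr, ε, hε, hsh⟩ := hMI
  -- extract a VC bound from NIP
  have hex : ∃ d : ℕ, ∀ A : Finset (Fin nx → U), d ≤ A.card →
      ¬ (∀ K ⊆ A, ∃ bK : Fin ny → U, ∀ c ∈ A, (φ.Realize (Sum.elim c bK) ↔ c ∈ K)) := by
    by_contra hc
    push_neg at hc
    exact hNIP (fun n => hc n)
  obtain ⟨d, hdbig⟩ := hex
  have hshat : ∀ A : Finset (Fin nx → U),
      (∀ K ⊆ A, ∃ bK : Fin ny → U, ∀ c ∈ A, (φ.Realize (Sum.elim c bK) ↔ c ∈ K)) →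
      A.card < d := by
    intro A hA
    by_contra h
    push_neg at h
    exact hdbig A h hA
  have hd1 : 1 ≤ d := by
    have h0 := hshat ∅ (fun K _hK => ⟨fun _ => Classical.arbitrary U,
      fun c hc => absurd hc (Finset.notMem_empty c)⟩)
    exact (by simpa using h0 : 0 < d)
  set k : ℕ := 2 * d with hkdef
  have hk1 : 1 ≤ k := by omega
  set ε' : ℝ := ε / 4 with hε'def
  have hε' : 0 < ε' := by positivity
  set C₀ : ℝ := ((k : ℝ) / ε') ^ (2 * k) with hC₀def
  have hC₀ : 0 < C₀ := by
    apply pow_pos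
    apply div_pos _ hε'
    exact_mod_cast (by omega : 0 < k)
  set mfun : ℕ → ℕ := fun n => k + ⌈(C₀ * (2:ℝ) ^ (n + 2)) ^ ((k : ℝ)⁻¹)⌉₊ with hmfun
  have hmk : ∀ n, k ≤ mfun n := fun n => Nat.le_add_right _ _
  have hmlow : ∀ n, C₀ * (2:ℝ) ^ (n + 2) ≤ ((mfun n : ℝ)) ^ k := by
    intro n
    have hx : (0:ℝ) ≤ C₀ * (2:ℝ) ^ (n + 2) := by positivity
    have h1 : (C₀ * (2:ℝ) ^ (n + 2)) ^ ((k : ℝ)⁻¹) ≤ (mfun n : ℝ) := by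
      refine le_trans (Nat.le_ceil _) ?_
      exact Nat.cast_le.mpr (Nat.le_add_left _ k)
    calc C₀ * (2:ℝ) ^ (n + 2) = ((C₀ * (2:ℝ) ^ (n + 2)) ^ ((k : ℝ)⁻¹)) ^ k := by
          rw [← Real.rpow_natCast ((C₀ * (2:ℝ) ^ (n + 2)) ^ ((k : ℝ)⁻¹)) k,
            ← Real.rpow_mul hx]
          rw [inv_mul_cancel₀ (by exact_mod_cast (by omega : k ≠ 0) : (k:ℝ) ≠ 0)]
          exact (Real.rpow_one _).symm
      _ ≤ (mfun n : ℝ) ^ k := by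
          apply pow_le_pow_left₀ (Real.rpow_nonneg hx _) h1
  have hmup : ∀ n, ((mfun n : ℝ))
      ≤ ((k : ℝ) + 1) + C₀ ^ ((k : ℝ)⁻¹) * (2 : ℝ) ^ (((n : ℝ) + 2) * (k : ℝ)⁻¹) := by
    intro n
    have hx : (0:ℝ) ≤ C₀ * (2:ℝ) ^ (n + 2) := by positivity
    have hceil : (⌈(C₀ * (2:ℝ) ^ (n + 2)) ^ ((k : ℝ)⁻¹)⌉₊ : ℝ)
        ≤ (C₀ * (2:ℝ) ^ (n + 2)) ^ ((k : ℝ)⁻¹) + 1 :=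
      le_of_lt (Nat.ceil_lt_add_one (Real.rpow_nonneg hx _))
    have hsplit : (C₀ * (2:ℝ) ^ (n + 2)) ^ ((k : ℝ)⁻¹)
        = C₀ ^ ((k : ℝ)⁻¹) * (2 : ℝ) ^ (((n : ℝ) + 2) * (k : ℝ)⁻¹) := by
      rw [Real.mul_rpow hC₀.le (by positivity)]
      congr 1
      rw [← Real.rpow_natCast (2:ℝ) (n+2), ← Real.rpow_mul (by norm_num : (0:ℝ) ≤ 2)]
      norm_num
    have hrw : (mfun n : ℝ) = (k : ℝ) + (⌈(C₀ * (2:ℝ) ^ (n + 2)) ^ ((k : ℝ)⁻¹)⌉₊ : ℝ) := by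
      rw [hmfun]; push_cast; ring
    rw [hrw]
    linarith [hceil, hsplit]
  -- main combinatorial estimate
  have main : ∀ n : ℕ, 2 ^ (n + 1) ≤ d * ((n + 1) * mfun n + 1) ^ d := by
    intro n
    obtain ⟨A, hcardA, hA⟩ := hsh n
    obtain ⟨A', hA'sub, hA'card⟩ := Finset.exists_subset_card_eq (s := A) (n := n + 1) hcardA
    set m : ℕ := mfun n with hmdef
    have hm1 : 1 ≤ m := le_trans hk1 (hmk n)
    have hm0 : (0:ℝ) < m := by exact_mod_cast (by omega : 0 < m)
    have hmpow : (0:ℝ) < (m:ℝ) ^ k := pow_pos hm0 k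
    have hkR : (0:ℝ) < (k:ℝ) := by exact_mod_cast (by omega : 0 < k)
    -- choice of type witnesses for each K ⊆ A'
    have hKex : ∀ K : Finset ↥(convexHull ℝ (FamilyF φ M)), K ⊆ A' →
        ∃ p : TypeSpace M ny, ∀ a ∈ A,
          ((a : TypeSpace M ny → ℝ) p ≤ r ↔ a ∈ K) ∧
          (r + ε ≤ (a : TypeSpace M ny → ℝ) p ↔ a ∉ K) :=
      fun K hK => hA K (hK.trans hA'sub)
    set pfun : Finset ↥(convexHull ℝ (FamilyF φ M)) → TypeSpace M ny :=
      fun K => if h : K ⊆ A' then Classical.choose (hKex K h)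
        else Quotient.mk (typeSetoid M ny) (fun _ => Classical.arbitrary U) with hpdef
    have hpfun : ∀ K (hK : K ⊆ A'), ∀ a ∈ A,
        ((a : TypeSpace M ny → ℝ) (pfun K) ≤ r ↔ a ∈ K) ∧
        (r + ε ≤ (a : TypeSpace M ny → ℝ) (pfun K) ↔ a ∉ K) := by
      intro K hK
      have hp : pfun K = Classical.choose (hKex K hK) := dif_pos hK
      rw [hp]
      exact Classical.choose_spec (hKex K hK)
    set bfun : Finset ↥(convexHull ℝ (FamilyF φ M)) → (Fin ny → U) :=
      fun K => Quotient.out (pfun K) with hbdef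
    have hout : ∀ K, Quotient.mk (typeSetoid M ny) (bfun K) = pfun K :=
      fun K => Quotient.out_eq _
    -- convex representations
    choose NN ww aa hNpos hww0 hww1 hvals using
      (fun g : ↥(convexHull ℝ (FamilyF φ M)) => convexHull_rep φ M g.1 g.2)
    -- condition for the sampling lemma
    have hBcard : ((A'.powerset.card : ℕ) : ℝ) = (2:ℝ) ^ (n + 1) := by
      rw [Finset.card_powerset, hA'card]
      push_cast
      ring
    have hcond : ((A'.powerset.card : ℕ) : ℝ) * ((m : ℝ) ^ k * (k : ℝ) ^ (2 * k))
        < ((m : ℝ) * ε') ^ (2 * k) := by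
      rw [hBcard]
      have e1 : ((m:ℝ) * ε') ^ (2*k) = (m:ℝ)^k * ((m:ℝ)^k * ε' ^ (2*k)) := by
        rw [mul_pow, two_mul, pow_add]
        ring
      have e2 : C₀ * ε' ^ (2*k) = (k:ℝ) ^ (2*k) := by
        rw [hC₀def, ← mul_pow, div_mul_cancel₀ _ (ne_of_gt hε')]
      have h2 : (C₀ * (2:ℝ) ^ (n+2)) * ε' ^ (2*k) ≤ (m:ℝ)^k * ε' ^ (2*k) :=
        mul_le_mul_of_nonneg_right (hmlow n) (by positivity)
      have h3 : (C₀ * (2:ℝ) ^ (n+2)) * ε' ^ (2*k) = (k:ℝ) ^ (2*k) * (2:ℝ) ^ (n+2) := by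
        rw [← e2]
        ring
      calc (2:ℝ) ^ (n+1) * ((m:ℝ)^k * (k:ℝ) ^ (2*k))
          < (2:ℝ) ^ (n+2) * ((m:ℝ)^k * (k:ℝ) ^ (2*k)) := by
            apply mul_lt_mul_of_pos_right _ (mul_pos hmpow (pow_pos hkR _))
            exact pow_lt_pow_right₀ one_lt_two (by omega)
        _ = (m:ℝ)^k * ((k:ℝ) ^ (2*k) * (2:ℝ) ^ (n+2)) := by ring
        _ ≤ (m:ℝ)^k * ((m:ℝ)^k * ε' ^ (2*k)) := by
            apply mul_le_mul_of_nonneg_left _ hmpow.le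
            rw [← h3]
            exact h2
        _ = ((m:ℝ) * ε') ^ (2*k) := e1.symm
    -- samples
    have hsample : ∀ g : ↥(convexHull ℝ (FamilyF φ M)), ∃ f : Fin m → Fin (NN g),
        ∀ K ∈ A'.powerset,
          |(∑ i : Fin m, FunF φ M (aa g (f i)) (pfun K))
            - (m : ℝ) * (∑ j, ww g j * FunF φ M (aa g j) (pfun K))| < (m : ℝ) * ε' :=
      fun g => exists_good_sample (ww g) (hww0 g) (hww1 g)
        (fun j K => FunF φ M (aa g j) (pfun K))
        (fun j K => funF_nonneg φ M (aa g j) (pfun K))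
        (fun j K => funF_le_one φ M (aa g j) (pfun K))
        A'.powerset ε' hε' hk1 (hmk n) hcond
    choose ff hff using hsample
    -- sampled points
    set pt : ↥(convexHull ℝ (FamilyF φ M)) → Fin m → (Fin nx → U) :=
      fun g i q => ((aa g (ff g i) q : M) : U) with hptdef
    set S : Finset (Fin nx → U) := A'.biUnion (fun g => Finset.image (pt g) Finset.univ)
      with hSdef
    have hScard : S.card ≤ (n + 1) * m := by
      refine le_trans Finset.card_biUnion_le ?_
      refine le_trans (Finset.sum_le_sum (fun g _ => Finset.card_image_le)) ?_
      simp [hA'card]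
    -- row counts
    have hrow : ∀ g, ∀ K, (∑ i : Fin m, FunF φ M (aa g (ff g i)) (pfun K))
        = (((Finset.filter (fun i : Fin m =>
            φ.Realize (Sum.elim (pt g i) (bfun K))) Finset.univ).card : ℕ) : ℝ) := by
      intro g K
      have hterm : ∀ i : Fin m, FunF φ M (aa g (ff g i)) (pfun K)
          = if φ.Realize (Sum.elim (pt g i) (bfun K)) then (1:ℝ) else 0 := by
        intro i
        rw [← hout K]
        by_cases hφ : φ.Realize (Sum.elim (pt g i) (bfun K))
        · rw [if_pos hφ]
          exact funF_eval_one φ M (aa g (ff g i)) (bfun K) hφ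
        · rw [if_neg hφ]
          exact funF_eval_zero φ M (aa g (ff g i)) (bfun K) hφ
      simp_rw [hterm]
      rw [Finset.sum_boole]
    have hgval : ∀ g : ↥(convexHull ℝ (FamilyF φ M)), ∀ K,
        (∑ j, ww g j * FunF φ M (aa g j) (pfun K)) = (g : TypeSpace M ny → ℝ) (pfun K) :=
      fun g K => (hvals g (pfun K)).symm
    set T : Finset ↥(convexHull ℝ (FamilyF φ M)) → Finset (Fin nx → U) :=
      fun K => Finset.filter (fun c => φ.Realize (Sum.elim c (bfun K))) S with hTdef
    have hrb : ∀ g ∈ A', ∀ K, K ⊆ A' →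
        (g ∈ K → (((Finset.filter (fun i : Fin m =>
            φ.Realize (Sum.elim (pt g i) (bfun K))) Finset.univ).card : ℕ) : ℝ)
            < (m:ℝ)*r + (m:ℝ)*ε') ∧
        (g ∉ K → (m:ℝ)*r + 3*((m:ℝ)*ε') < (((Finset.filter (fun i : Fin m =>
            φ.Realize (Sum.elim (pt g i) (bfun K))) Finset.univ).card : ℕ) : ℝ)) := by
      intro g hgA' K hK
      have h1 := hff g K (Finset.mem_powerset.mpr hK)
      rw [hrow g K, hgval g K] at h1
      have habs := abs_lt.mp h1
      have hcnd := hpfun K hK g (hA'sub hgA')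
      constructor
      · intro hgK
        have hle : (g : TypeSpace M ny → ℝ) (pfun K) ≤ r := hcnd.1.mpr hgK
        have hmr : (m:ℝ) * ((g : TypeSpace M ny → ℝ) (pfun K)) ≤ (m:ℝ) * r :=
          mul_le_mul_of_nonneg_left hle hm0.le
        linarith [habs.2]
      · intro hgK
        have hge : r + ε ≤ (g : TypeSpace M ny → ℝ) (pfun K) := hcnd.2.mpr hgK
        have hmr : (m:ℝ) * (r + ε) ≤ (m:ℝ) * ((g : TypeSpace M ny → ℝ) (pfun K)) :=
          mul_le_mul_of_nonneg_left hge hm0.le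
        have hee : ε = 4 * ε' := by rw [hε'def]; ring
        rw [hee] at hmr
        linarith [habs.1]
    have hTinj : Set.InjOn T (A'.powerset : Set (Finset ↥(convexHull ℝ (FamilyF φ M)))) := by
      intro K1 hK1 K2 hK2 heq
      have hK1' : K1 ⊆ A' := Finset.mem_powerset.mp hK1
      have hK2' : K2 ⊆ A' := Finset.mem_powerset.mp hK2
      by_contra hne
      obtain ⟨g, hg⟩ := Finset.symmDiff_nonempty.mpr hne
      rw [Finset.mem_symmDiff] at hg
      have hgA' : g ∈ A' := by
        rcases hg with ⟨h, _⟩ | ⟨h, _⟩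
        · exact hK1' h
        · exact hK2' h
      have hfeq : ∀ i : Fin m, φ.Realize (Sum.elim (pt g i) (bfun K1))
          ↔ φ.Realize (Sum.elim (pt g i) (bfun K2)) := by
        intro i
        have hptS : pt g i ∈ S := Finset.mem_biUnion.mpr
          ⟨g, hgA', Finset.mem_image.mpr ⟨i, Finset.mem_univ i, rfl⟩⟩
        constructor
        · intro h
          have hmem : pt g i ∈ T K1 := Finset.mem_filter.mpr ⟨hptS, h⟩
          rw [heq] at hmem
          exact (Finset.mem_filter.mp hmem).2
        · intro h
          have hmem : pt g i ∈ T K2 := Finset.mem_filter.mpr ⟨hptS, h⟩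
          rw [← heq] at hmem
          exact (Finset.mem_filter.mp hmem).2
      have hcardeq : (Finset.filter (fun i : Fin m =>
            φ.Realize (Sum.elim (pt g i) (bfun K1))) Finset.univ).card
          = (Finset.filter (fun i : Fin m =>
            φ.Realize (Sum.elim (pt g i) (bfun K2))) Finset.univ).card := by
        congr 1
        apply Finset.filter_congr
        intro i _
        simp only [hfeq i]
      have hb1 := hrb g hgA' K1 hK1'
      have hb2 := hrb g hgA' K2 hK2'
      have hmε : 0 < (m:ℝ) * ε' := mul_pos hm0 hε'
      rcases hg with ⟨hin, hout2⟩ | ⟨hin, hout2⟩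
      · have c1 := hb1.1 hin
        have c2 := hb2.2 hout2
        rw [hcardeq] at c1
        linarith
      · have c1 := hb2.1 hin
        have c2 := hb1.2 hout2
        rw [← hcardeq] at c1
        linarith
    set 𝒜 : Finset (Finset (Fin nx → U)) := A'.powerset.image T with h𝒜def
    have h𝒜card : 𝒜.card = 2 ^ (n + 1) := by
      rw [h𝒜def, Finset.card_image_of_injOn hTinj, Finset.card_powerset, hA'card]
    have hsub𝒜 : 𝒜.shatterer ⊆ (Finset.range d).biUnion (fun i => Finset.powersetCard i S) := by
      intro s hs
      rw [Finset.mem_shatterer] at hs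
      obtain ⟨u, hu𝒜, hsu⟩ := hs (Finset.Subset.refl s)
      have hsS : s ⊆ S := by
        intro c hc
        have hcu : c ∈ s ∩ u := hsu.symm ▸ hc
        obtain ⟨K, _, rfl⟩ := Finset.mem_image.mp hu𝒜
        exact Finset.filter_subset _ _ ((Finset.mem_inter.mp hcu).2)
      have hprop : ∀ K' ⊆ s, ∃ bb : Fin ny → U, ∀ c ∈ s,
          (φ.Realize (Sum.elim c bb) ↔ c ∈ K') := by
        intro K' hK'
        obtain ⟨u', hu', hsu'⟩ := hs hK'
        obtain ⟨K, _, rfl⟩ := Finset.mem_image.mp hu'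
        refine ⟨bfun K, fun c hc => ?_⟩
        constructor
        · intro hφ
          have : c ∈ s ∩ T K :=
            Finset.mem_inter.mpr ⟨hc, Finset.mem_filter.mpr ⟨hsS hc, hφ⟩⟩
          rw [hsu'] at this
          exact this
        · intro hK'c
          have : c ∈ s ∩ T K := hsu'.symm ▸ hK'c
          exact (Finset.mem_filter.mp (Finset.mem_inter.mp this).2).2
      exact Finset.mem_biUnion.mpr ⟨s.card, Finset.mem_range.mpr (hshat s hprop),
        Finset.mem_powersetCard.mpr ⟨hsS, rfl⟩⟩
    have hcount : 𝒜.shatterer.card ≤ d * ((n + 1) * m + 1) ^ d := by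
      refine le_trans (Finset.card_le_card hsub𝒜) ?_
      refine le_trans Finset.card_biUnion_le ?_
      have hterm : ∀ i ∈ Finset.range d,
          (Finset.powersetCard i S).card ≤ ((n + 1) * m + 1) ^ d := by
        intro i hi
        rw [Finset.card_powersetCard]
        refine le_trans (Nat.choose_le_pow S.card i) ?_
        calc S.card ^ i ≤ ((n + 1) * m + 1) ^ i :=
              Nat.pow_le_pow_left (by omega) i
          _ ≤ ((n + 1) * m + 1) ^ d :=
              Nat.pow_le_pow_right (by omega) (Nat.le_of_lt (Finset.mem_range.mp hi))
      refine le_trans (Finset.sum_le_sum hterm) ?_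
      rw [Finset.sum_const, Finset.card_range, smul_eq_mul]
    calc 2 ^ (n + 1) = 𝒜.card := h𝒜card.symm
      _ ≤ 𝒜.shatterer.card := Finset.card_le_card_shatterer 𝒜
      _ ≤ d * ((n + 1) * m + 1) ^ d := hcount
  -- final asymptotic contradiction
  have hd0R : (0:ℝ) < (d:ℝ) := by exact_mod_cast (by omega : 0 < d)
  set D : ℝ := ((k : ℝ) + 1) + C₀ ^ ((k : ℝ)⁻¹) with hDdef
  have hDpos : 0 < D := by
    rw [hDdef]
    have h1 : (0:ℝ) ≤ C₀ ^ ((k : ℝ)⁻¹) := Real.rpow_nonneg hC₀.le _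
    have hk0 : (0:ℝ) ≤ (k:ℝ) := Nat.cast_nonneg k
    linarith
  set E : ℝ := (d : ℝ) * D ^ d with hEdef
  have hEpos : 0 < E := mul_pos hd0R (pow_pos hDpos d)
  have hsq1 : (1:ℝ) < Real.sqrt 2 := by
    rw [show (1:ℝ) = Real.sqrt 1 from Real.sqrt_one.symm]
    exact Real.sqrt_lt_sqrt (by norm_num) (by norm_num)
  have hsq0 : (0:ℝ) < Real.sqrt 2 := lt_trans one_pos hsq1
  have hkd : ((k:ℝ))⁻¹ * (d:ℝ) = 1/2 := by
    have hkR : (k:ℝ) = 2 * (d:ℝ) := by rw [hkdef]; push_cast; ring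
    rw [hkR]
    rw [mul_inv, mul_assoc, inv_mul_cancel₀ (ne_of_gt hd0R)]
    norm_num
  have hsqrt_eq : ∀ n : ℕ, (Real.sqrt 2) ^ n = (2:ℝ) ^ ((n:ℝ) * (1/2)) := by
    intro n
    rw [Real.sqrt_eq_rpow]
    rw [← Real.rpow_natCast ((2:ℝ) ^ ((1:ℝ)/2)) n, ← Real.rpow_mul (by norm_num : (0:ℝ) ≤ 2)]
    congr 1
    ring
  have hbound : ∀ n : ℕ, (Real.sqrt 2) ^ n ≤ E * ((n:ℝ) + 2) ^ d := by
    intro n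
    set m : ℕ := mfun n with hmdef
    have hm1 : 1 ≤ m := le_trans hk1 (hmk n)
    have hmain : ((2:ℝ)) ^ (n+1) ≤ (d:ℝ) * (((n+1) * m + 1 : ℕ) : ℝ) ^ d := by
      exact_mod_cast main n
    set w : ℝ := (2 : ℝ) ^ (((n : ℝ) + 2) * (k : ℝ)⁻¹) with hwdef
    have hw1 : (1:ℝ) ≤ w := by
      rw [hwdef]
      apply Real.one_le_rpow (by norm_num)
      positivity
    have hw0 : (0:ℝ) < w := lt_of_lt_of_le one_pos hw1
    have hmw : (m : ℝ) ≤ D * w := by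
      have hup := hmup n
      rw [← hwdef] at hup
      have h1 : (k:ℝ) + 1 ≤ ((k:ℝ) + 1) * w := le_mul_of_one_le_right (by positivity) hw1
      have h2 : D * w = ((k:ℝ)+1) * w + C₀ ^ ((k : ℝ)⁻¹) * w := by rw [hDdef]; ring
      rw [h2]
      linarith
    have harg : (((n+1) * m + 1 : ℕ) : ℝ) ≤ ((n:ℝ) + 2) * (D * w) := by
      have hmR : (1:ℝ) ≤ (m:ℝ) := by exact_mod_cast hm1
      have e1 : (((n+1) * m + 1 : ℕ) : ℝ) = ((n:ℝ)+1) * (m:ℝ) + 1 := by push_cast; ring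
      have e2 : ((n:ℝ)+1) * (m:ℝ) + 1 ≤ ((n:ℝ)+2) * (m:ℝ) := by nlinarith
      have e3 : ((n:ℝ)+2) * (m:ℝ) ≤ ((n:ℝ)+2) * (D * w) :=
        mul_le_mul_of_nonneg_left hmw (by positivity)
      linarith [e1.le, e1.ge]
    have hpow : (((n+1) * m + 1 : ℕ) : ℝ) ^ d ≤ (((n:ℝ) + 2) * (D * w)) ^ d :=
      pow_le_pow_left₀ (Nat.cast_nonneg _) harg d
    have hwd : w ^ d = (2:ℝ) ^ (((n:ℝ) + 2) * (1/2)) := by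
      rw [hwdef, ← Real.rpow_natCast ((2:ℝ) ^ (((n : ℝ) + 2) * (k : ℝ)⁻¹)) d,
        ← Real.rpow_mul (by norm_num : (0:ℝ) ≤ 2)]
      congr 1
      rw [mul_assoc, hkd]
    have hchain : ((2:ℝ)) ^ (n+1) ≤ E * ((n:ℝ) + 2) ^ d * (2:ℝ) ^ (((n:ℝ) + 2) * (1/2)) := by
      calc ((2:ℝ)) ^ (n+1) ≤ (d:ℝ) * (((n+1) * m + 1 : ℕ) : ℝ) ^ d := hmain
        _ ≤ (d:ℝ) * (((n:ℝ) + 2) * (D * w)) ^ d :=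
            mul_le_mul_of_nonneg_left hpow hd0R.le
        _ = (d:ℝ) * D ^ d * ((n:ℝ) + 2) ^ d * w ^ d := by rw [mul_pow, mul_pow]; ring
        _ = E * ((n:ℝ) + 2) ^ d * (2:ℝ) ^ (((n:ℝ) + 2) * (1/2)) := by rw [hEdef, hwd]
    have hsplit2 : ((2:ℝ)) ^ (n+1)
        = (Real.sqrt 2) ^ n * (2:ℝ) ^ (((n:ℝ) + 2) * (1/2)) := by
      rw [hsqrt_eq n, ← Real.rpow_add (by norm_num : (0:ℝ) < 2)]
      rw [← Real.rpow_natCast (2:ℝ) (n+1)]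
      congr 1
      push_cast
      ring
    rw [hsplit2] at hchain
    have hposw : (0:ℝ) < (2:ℝ) ^ (((n:ℝ) + 2) * (1/2)) := Real.rpow_pos_of_pos (by norm_num) _
    exact le_of_mul_le_mul_right hchain hposw
  -- limits
  have ht : Filter.Tendsto (fun n : ℕ => ((n:ℝ)) ^ d / (Real.sqrt 2) ^ n)
      Filter.atTop (nhds 0) := tendsto_pow_const_div_const_pow_of_one_lt d hsq1
  have ht2 : Filter.Tendsto (fun n : ℕ => (((n:ℕ):ℝ) + 2) ^ d / (Real.sqrt 2) ^ (n + 2))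
      Filter.atTop (nhds 0) := by
    have hcomp := ht.comp (Filter.tendsto_add_atTop_nat 2)
    have heq : ((fun n : ℕ => ((n:ℝ)) ^ d / (Real.sqrt 2) ^ n) ∘ (fun n => n + 2))
        = fun n : ℕ => (((n:ℕ):ℝ) + 2) ^ d / (Real.sqrt 2) ^ (n + 2) := by
      funext n
      simp only [Function.comp_apply]
      push_cast
      ring
    rw [heq] at hcomp
    exact hcomp
  have ht3 : Filter.Tendsto (fun n : ℕ => (((n:ℕ):ℝ) + 2) ^ d / (Real.sqrt 2) ^ n)
      Filter.atTop (nhds 0) := by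
    have heqf : (fun n : ℕ => (((n:ℕ):ℝ) + 2) ^ d / (Real.sqrt 2) ^ n)
        = fun n : ℕ => 2 * ((((n:ℕ):ℝ) + 2) ^ d / (Real.sqrt 2) ^ (n + 2)) := by
      funext n
      rw [pow_add]
      rw [show (Real.sqrt 2) ^ 2 = 2 from Real.sq_sqrt (by norm_num)]
      field_simp
    rw [heqf]
    simpa using ht2.const_mul (2:ℝ)
  have hev : ∀ᶠ n : ℕ in Filter.atTop,
      (((n:ℕ):ℝ) + 2) ^ d / (Real.sqrt 2) ^ n < E⁻¹ := by
    apply ht3.eventually_lt_const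
    positivity
  obtain ⟨n, hn⟩ := hev.exists
  have hb := hbound n
  have hsqpos : (0:ℝ) < (Real.sqrt 2) ^ n := pow_pos hsq0 n
  rw [div_lt_iff₀ hsqpos] at hn
  have hcontra : (Real.sqrt 2) ^ n < (Real.sqrt 2) ^ n := by
    calc (Real.sqrt 2) ^ n ≤ E * (((n:ℕ):ℝ) + 2) ^ d := hb
      _ < E * (E⁻¹ * (Real.sqrt 2) ^ n) := by
          apply mul_lt_mul_of_pos_left hn hEpos
      _ = (Real.sqrt 2) ^ n := by
          field_simp
  exact lt_irrefl _ hcontra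
end

section
/- Let T be a complete first-order theory in a countable language L, U a monster model of T (κ-saturated and strongly κ-homogeneous for a sufficiently large cardinal κ), M an elementary substructure of U with |M| < κ, and φ(x;y) a partitioned L-formula that is NIP. Then conv(𝔽_M^φ), viewed as a subset of ℝ^{S_y(M)}, is sequentially dependent. -/
set_option maxHeartbeats 1000000


open FirstOrder Cardinal Set Filter Topology

variable {L : FirstOrder.Language.{0, 0}}

/-! ### Auxiliary combinatorial machinery for Theorem 3.14 -/

namespace NIPAux3p14

noncomputable section
open Real Finset
open scoped Classical

/-- real truth value of a proposition -/
def bval (P : Prop) : ℝ := if P then 1 else 0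

lemma bval_nonneg (P : Prop) : 0 ≤ bval P := by
  unfold bval; split <;> norm_num

lemma bval_le_one (P : Prop) : bval P ≤ 1 := by
  unfold bval; split <;> norm_num

lemma bval_of (P : Prop) (h : P) : bval P = 1 := by unfold bval; rw [if_pos h]
lemma bval_of_not (P : Prop) (h : ¬P) : bval P = 0 := by unfold bval; rw [if_neg h]

lemma bval_mono {P Q : Prop} (h : P → Q) : bval P ≤ bval Q := by
  by_cases hp : P
  · rw [bval_of _ hp, bval_of _ (h hp)]
  · rw [bval_of_not _ hp]; exact bval_nonneg Q

lemma bval_or_le (P Q : Prop) : bval (P ∨ Q) ≤ bval P + bval Q := by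
  unfold bval; split
  · rename_i h; rcases h with h | h
    · rw [if_pos h]; have := bval_nonneg Q; unfold bval at this; linarith
    · rw [if_pos h]; have := bval_nonneg P; unfold bval at this; linarith
  · have := bval_nonneg P; have := bval_nonneg Q; unfold bval at *; linarith

lemma bval_exists_le {m : ℕ} (P : Fin m → Prop) :
    bval (∃ i, P i) ≤ ∑ i, bval (P i) := by
  by_cases h : ∃ i, P i
  · obtain ⟨i, hi⟩ := h
    rw [bval_of _ ⟨i, hi⟩]
    calc (1:ℝ) = bval (P i) := (bval_of _ hi).symm
    _ ≤ ∑ i, bval (P i) :=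
      Finset.single_le_sum (fun j _ => bval_nonneg (P j)) (Finset.mem_univ i)
  · rw [bval_of_not _ h]
    exact Finset.sum_nonneg fun j _ => bval_nonneg (P j)

/-- exp upper bound: for `y ≤ 1/2`, `e^y ≤ 1 + y + 2y²`. -/
lemma exp_le_quad {y : ℝ} (hy : y ≤ 1/2) : Real.exp y ≤ 1 + y + 2*y^2 := by
  have h1 : 1 - y ≤ Real.exp (-y) := by
    have := Real.add_one_le_exp (-y); linarith
  have h2 : 0 < 1 - y := by linarith
  have h3 : Real.exp y ≤ 1 / (1 - y) := by
    rw [le_div_iff₀ h2]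
    have := Real.exp_neg y
    calc Real.exp y * (1 - y) ≤ Real.exp y * Real.exp (-y) := by
          apply mul_le_mul_of_nonneg_left h1 (Real.exp_pos y).le
    _ = 1 := by rw [← Real.exp_add]; simp
  refine h3.trans ?_
  rw [div_le_iff₀ h2]
  nlinarith [sq_nonneg y, sq_nonneg (y*y)]


/-- product-of-sums identity specialised to functions `Fin m' → Fin k`. -/
lemma sum_prod_pow {k m' : ℕ} (g : Fin k → ℝ) :
    ∑ v : Fin m' → Fin k, ∏ j, g (v j) = (∑ x, g x) ^ m' := by
  have h := Finset.prod_univ_sum (fun _ : Fin m' => (Finset.univ : Finset (Fin k))) (fun _ j => g j)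
  rw [Fintype.piFinset_univ] at h
  rw [← h, Finset.prod_const, Finset.card_univ, Fintype.card_fin]

/-- Weighted Chernoff, upper tail. -/
lemma chernoff_upper {k m' : ℕ} (w : Fin k → ℝ) (hw0 : ∀ x, 0 ≤ w x)
    (hw1 : ∑ x, w x = 1) (p : Fin k → ℝ) (hp0 : ∀ x, 0 ≤ p x) (hp1 : ∀ x, p x ≤ 1)
    (t : ℝ) (ht : 0 < t) (ht2 : t ≤ 2) :
    ∑ v : Fin m' → Fin k, (∏ j, w (v j)) *
        bval ((m' : ℝ) * ((∑ x, w x * p x) + t) ≤ ∑ j, p (v j))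
      ≤ Real.exp (-(m' : ℝ) * t^2 / 8) := by
  set μ : ℝ := ∑ x, w x * p x with hμ
  have hμ0 : 0 ≤ μ := Finset.sum_nonneg fun x _ => mul_nonneg (hw0 x) (hp0 x)
  have hμ1 : μ ≤ 1 := by
    calc μ ≤ ∑ x, w x := Finset.sum_le_sum fun x _ => by
            nlinarith [hw0 x, hp0 x, hp1 x]
    _ = 1 := hw1
  set s : ℝ := t / 4 with hs
  have hs0 : 0 < s := by positivity
  have hs2 : s ≤ 1/2 := by rw [hs]; linarith
  have key : ∀ v : Fin m' → Fin k,
      (∏ j, w (v j)) * bval ((m' : ℝ) * (μ + t) ≤ ∑ j, p (v j))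
      ≤ Real.exp (-(s * ((m':ℝ) * t))) * ∏ j, (w (v j) * Real.exp (s * (p (v j) - μ))) := by
    intro v
    have hwprod : 0 ≤ ∏ j, w (v j) := Finset.prod_nonneg fun j _ => hw0 (v j)
    by_cases h : (m' : ℝ) * (μ + t) ≤ ∑ j, p (v j)
    · rw [bval_of _ h, mul_one]
      have heq : Real.exp (-(s * ((m':ℝ) * t))) * ∏ j, (w (v j) * Real.exp (s * (p (v j) - μ)))
          = (∏ j, w (v j)) * Real.exp (s * ((∑ j, p (v j)) - (m':ℝ) * (μ + t))) := by
        rw [Finset.prod_mul_distrib, ← Real.exp_sum, ← Finset.mul_sum]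
        rw [mul_comm (Real.exp _) _, mul_assoc, ← Real.exp_add]
        congr 2
        rw [Finset.sum_sub_distrib, Finset.sum_const, Finset.card_univ, Fintype.card_fin]
        push_cast
        ring
      rw [heq]
      have h1 : (1:ℝ) ≤ Real.exp (s * ((∑ j, p (v j)) - (m':ℝ) * (μ + t))) := by
        rw [← Real.exp_zero]
        apply Real.exp_le_exp.2
        have : (0:ℝ) ≤ (∑ j, p (v j)) - (m':ℝ) * (μ + t) := by linarith
        positivity
      nlinarith
    · rw [bval_of_not _ h, mul_zero]
      exact mul_nonneg (Real.exp_pos _).le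
        (Finset.prod_nonneg fun j _ => mul_nonneg (hw0 _) (Real.exp_pos _).le)
  have e1 : ∑ x, w x * (1 + s * (p x - μ) + 2 * (s * (p x - μ))^2)
      = (∑ x, w x) + s * (∑ x, w x * (p x - μ)) + 2 * s^2 * (∑ x, w x * (p x - μ)^2) := by
    rw [Finset.mul_sum, Finset.mul_sum, ← Finset.sum_add_distrib, ← Finset.sum_add_distrib]
    apply Finset.sum_congr rfl; intro x _; ring
  have e2 : ∑ x, w x * (p x - μ) = 0 := by
    have h' : ∑ x, w x * (p x - μ) = (∑ x, w x * p x) - μ * (∑ x, w x) := by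
      rw [Finset.mul_sum, ← Finset.sum_sub_distrib]
      apply Finset.sum_congr rfl; intro x _; ring
    rw [h', hw1, ← hμ]; ring
  have e3 : ∑ x, w x * (p x - μ)^2 ≤ 1 := by
    calc ∑ x, w x * (p x - μ)^2 ≤ ∑ x, w x :=
        Finset.sum_le_sum (fun x _ => by
          have hsq : (p x - μ)^2 ≤ 1 := by nlinarith [hp0 x, hp1 x, hμ0, hμ1]
          nlinarith [mul_le_mul_of_nonneg_left hsq (hw0 x)])
      _ = 1 := hw1
  have e4 : 0 ≤ ∑ x, w x * (p x - μ)^2 :=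
    Finset.sum_nonneg fun x _ => mul_nonneg (hw0 x) (sq_nonneg _)
  calc ∑ v : Fin m' → Fin k, (∏ j, w (v j)) * bval ((m' : ℝ) * (μ + t) ≤ ∑ j, p (v j))
      ≤ ∑ v : Fin m' → Fin k, Real.exp (-(s * ((m':ℝ) * t))) *
          ∏ j, (w (v j) * Real.exp (s * (p (v j) - μ))) :=
        Finset.sum_le_sum fun v _ => key v
    _ = Real.exp (-(s * ((m':ℝ) * t))) * (∑ x, w x * Real.exp (s * (p x - μ))) ^ m' := by
        rw [← Finset.mul_sum]
        congr 1
        exact sum_prod_pow (fun x => w x * Real.exp (s * (p x - μ)))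
    _ ≤ Real.exp (-(s * ((m':ℝ) * t))) * Real.exp (2 * s^2) ^ m' := by
        apply mul_le_mul_of_nonneg_left _ (Real.exp_pos _).le
        apply pow_le_pow_left₀
        · exact Finset.sum_nonneg fun x _ => mul_nonneg (hw0 x) (Real.exp_pos _).le
        · calc ∑ x, w x * Real.exp (s * (p x - μ))
              ≤ ∑ x, w x * (1 + s * (p x - μ) + 2 * (s * (p x - μ))^2) := by
                apply Finset.sum_le_sum
                intro x _
                apply mul_le_mul_of_nonneg_left _ (hw0 x)
                apply exp_le_quad
                nlinarith [hp1 x, hp0 x, hμ0, hμ1, hs0, hs2]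
          _ = (∑ x, w x) + s * (∑ x, w x * (p x - μ)) + 2 * s^2 * (∑ x, w x * (p x - μ)^2) := e1
          _ ≤ 1 + 2 * s^2 := by rw [hw1, e2]; nlinarith [sq_nonneg s]
          _ ≤ Real.exp (2 * s^2) := by
                have := Real.add_one_le_exp (2 * s^2); linarith
    _ = Real.exp (-(m' : ℝ) * t^2 / 8) := by
        rw [← Real.exp_nat_mul, ← Real.exp_add]
        congr 1
        rw [hs]; ring


/-- Weighted Chernoff, two-sided. -/
lemma chernoff_two {k m' : ℕ} (w : Fin k → ℝ) (hw0 : ∀ x, 0 ≤ w x)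
    (hw1 : ∑ x, w x = 1) (p : Fin k → ℝ) (hp0 : ∀ x, 0 ≤ p x) (hp1 : ∀ x, p x ≤ 1)
    (t : ℝ) (ht : 0 < t) (ht2 : t ≤ 2) :
    ∑ v : Fin m' → Fin k, (∏ j, w (v j)) *
        bval ((m' : ℝ) * t ≤ |(∑ j, p (v j)) - (m' : ℝ) * (∑ x, w x * p x)|)
      ≤ 2 * Real.exp (-(m' : ℝ) * t^2 / 8) := by
  set μ : ℝ := ∑ x, w x * p x with hμ
  have hup := chernoff_upper (m' := m') w hw0 hw1 p hp0 hp1 t ht ht2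
  have hlow := chernoff_upper (m' := m') w hw0 hw1 (fun x => 1 - p x)
    (fun x => by simpa using hp1 x) (fun x => by simpa using hp0 x) t ht ht2
  have hμ' : ∑ x, w x * (1 - p x) = 1 - μ := by
    have h' : ∑ x, w x * (1 - p x) = (∑ x, w x) - (∑ x, w x * p x) := by
      rw [← Finset.sum_sub_distrib]; apply Finset.sum_congr rfl; intro x _; ring
    rw [h', hw1, hμ]
  calc ∑ v : Fin m' → Fin k, (∏ j, w (v j)) *
        bval ((m' : ℝ) * t ≤ |(∑ j, p (v j)) - (m' : ℝ) * μ|)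
      ≤ ∑ v : Fin m' → Fin k, ((∏ j, w (v j)) *
          bval ((m' : ℝ) * (μ + t) ≤ ∑ j, p (v j)) +
        (∏ j, w (v j)) *
          bval ((m' : ℝ) * ((∑ x, w x * (1 - p x)) + t) ≤ ∑ j, (1 - p (v j)))) := by
        apply Finset.sum_le_sum
        intro v _
        have hwp : 0 ≤ ∏ j, w (v j) := Finset.prod_nonneg fun j _ => hw0 (v j)
        rw [← mul_add]
        apply mul_le_mul_of_nonneg_left _ hwp
        have habs : ((m' : ℝ) * t ≤ |(∑ j, p (v j)) - (m' : ℝ) * μ|) →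
            ((m' : ℝ) * (μ + t) ≤ ∑ j, p (v j)) ∨
            ((m' : ℝ) * ((∑ x, w x * (1 - p x)) + t) ≤ ∑ j, (1 - p (v j))) := by
          intro h
          rw [hμ']
          rw [le_abs] at h
          rcases h with h | h
          · left; linarith
          · right
            rw [Finset.sum_sub_distrib, Finset.sum_const, Finset.card_univ, Fintype.card_fin,
              nsmul_eq_mul, mul_one]
            linarith
        calc bval ((m' : ℝ) * t ≤ |(∑ j, p (v j)) - (m' : ℝ) * μ|)
            ≤ bval (((m' : ℝ) * (μ + t) ≤ ∑ j, p (v j)) ∨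
              ((m' : ℝ) * ((∑ x, w x * (1 - p x)) + t) ≤ ∑ j, (1 - p (v j)))) :=
              bval_mono habs
          _ ≤ _ := bval_or_le _ _
    _ ≤ Real.exp (-(m' : ℝ) * t^2 / 8) + Real.exp (-(m' : ℝ) * t^2 / 8) := by
        rw [Finset.sum_add_distrib]
        exact add_le_add hup (by simpa using hlow)
    _ = 2 * Real.exp (-(m' : ℝ) * t^2 / 8) := by ring


/-- Existence of a good sample tuple. -/
lemma good_tuple {k m m' : ℕ} (w : Fin k → ℝ) (hw0 : ∀ x, 0 ≤ w x) (hw1 : ∑ x, w x = 1)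
    (p : Fin m → Fin k → ℝ) (hp0 : ∀ i x, 0 ≤ p i x) (hp1 : ∀ i x, p i x ≤ 1)
    (t : ℝ) (ht : 0 < t) (ht2 : t ≤ 2)
    (hsmall : (m : ℝ) * (2 * Real.exp (-(m' : ℝ) * t^2 / 8)) < 1) :
    ∃ v : Fin m' → Fin k, ∀ i,
      |(∑ j, p i (v j)) - (m' : ℝ) * (∑ x, w x * p i x)| < (m' : ℝ) * t := by
  by_contra hcon
  push_neg at hcon
  have key : (1:ℝ) ≤ (m : ℝ) * (2 * Real.exp (-(m' : ℝ) * t^2 / 8)) := by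
    calc (1:ℝ) = ∑ v : Fin m' → Fin k, ∏ j, w (v j) := by
          rw [sum_prod_pow w, hw1, one_pow]
    _ = ∑ v : Fin m' → Fin k, (∏ j, w (v j)) *
          bval (∃ i, (m':ℝ) * t ≤ |(∑ j, p i (v j)) - (m' : ℝ) * (∑ x, w x * p i x)|) := by
        apply Finset.sum_congr rfl
        intro v _
        obtain ⟨i, hi⟩ := hcon v
        rw [bval_of _ ⟨i, hi⟩, mul_one]
    _ ≤ ∑ v : Fin m' → Fin k, (∏ j, w (v j)) *
          ∑ i, bval ((m':ℝ) * t ≤ |(∑ j, p i (v j)) - (m' : ℝ) * (∑ x, w x * p i x)|) := by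
        apply Finset.sum_le_sum
        intro v _
        exact mul_le_mul_of_nonneg_left (bval_exists_le _)
          (Finset.prod_nonneg fun j _ => hw0 (v j))
    _ = ∑ i, ∑ v : Fin m' → Fin k, (∏ j, w (v j)) *
          bval ((m':ℝ) * t ≤ |(∑ j, p i (v j)) - (m' : ℝ) * (∑ x, w x * p i x)|) := by
        rw [Finset.sum_comm]
        apply Finset.sum_congr rfl
        intro v _
        rw [Finset.mul_sum]
    _ ≤ ∑ _i : Fin m, 2 * Real.exp (-(m' : ℝ) * t^2 / 8) := by
        apply Finset.sum_le_sum
        intro i _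
        exact chernoff_two w hw0 hw1 (p i) (hp0 i) (hp1 i) t ht ht2
    _ = (m : ℝ) * (2 * Real.exp (-(m' : ℝ) * t^2 / 8)) := by
        rw [Finset.sum_const, Finset.card_univ, Fintype.card_fin, nsmul_eq_mul]
  linarith

/-- geometric-type bound -/
lemma sum_pow_le (n v : ℕ) : ∑ k ∈ Finset.Iic v, n ^ k ≤ (n+1)^(v+1) := by
  induction v with
  | zero =>
    have : Finset.Iic 0 = {0} := rfl
    simp [this]
  | succ v ih =>
    have h1 : Finset.Iic (v+1) = insert (v+1) (Finset.Iic v) := by ext x; simp [Nat.lt_succ_iff]; omega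
    rw [h1, Finset.sum_insert (by simp)]
    have h2 : n ^ (v+1) ≤ n * (n+1)^(v+1) := by
      calc n ^ (v+1) = n * n ^ v := by ring
      _ ≤ n * (n+1)^(v+1) := Nat.mul_le_mul_left n
          (Nat.pow_le_pow_left (by omega) v |>.trans
            (Nat.pow_le_pow_right (by omega) (by omega)))
    calc n ^ (v+1) + ∑ k ∈ Finset.Iic v, n ^ k ≤ n * (n+1)^(v+1) + (n+1)^(v+1) := by
          exact Nat.add_le_add h2 ih
    _ = (n+1)^(v+2) := by ring
lemma sum_choose_le (n v : ℕ) : ∑ k ∈ Finset.Iic v, n.choose k ≤ (n+1)^(v+1) :=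
  le_trans (Finset.sum_le_sum fun k _ => Nat.choose_le_pow n k) (sum_pow_le n v)


/-- If the primal relation has VC-type bound `d`, then no list of `ι`-indexed points
is dually shattered once `card ι ≥ 2^d`. -/
lemma dual_bound {α β : Type*} (R : α → β → Prop) (d : ℕ)
    (hd : ∀ A : Finset α, (∀ K ⊆ A, ∃ b, ∀ x ∈ A, R x b ↔ x ∈ K) → A.card < d)
    {ι : Type*} [Fintype ι] (c : ι → β)
    (hshat : ∀ K : Finset ι, ∃ a, ∀ i, R a (c i) ↔ i ∈ K) :
    Fintype.card ι < 2 ^ d := by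
  by_contra hle
  push_neg at hle
  obtain ⟨emb⟩ : Nonempty (Finset (Fin d) ↪ ι) := by
    apply Function.Embedding.nonempty_of_card_le
    simpa [Fintype.card_finset, Fintype.card_fin] using hle
  choose a ha using fun i : Fin d =>
    hshat (Finset.univ.filter (fun j => ∃ s : Finset (Fin d), emb s = j ∧ i ∈ s))
  have hmem : ∀ (i : Fin d) (s : Finset (Fin d)), R (a i) (c (emb s)) ↔ i ∈ s := by
    intro i s
    rw [ha i (emb s)]
    simp only [Finset.mem_filter, Finset.mem_univ, true_and]
    constructor
    · rintro ⟨s', hs', hi⟩; rwa [← emb.injective hs']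
    · intro hi; exact ⟨s, rfl, hi⟩
  have hinj : Function.Injective a := by
    intro i j hij
    by_contra hne
    have h1 := hmem i {i}
    have h2 := hmem j {i}
    rw [hij] at h1
    have : j ∈ ({i} : Finset (Fin d)) := h2.1 (h1.2 (Finset.mem_singleton_self i))
    exact hne (Finset.mem_singleton.1 this).symm
  set A : Finset α := Finset.univ.image a with hA
  have hcard : A.card = d := by
    rw [hA, Finset.card_image_of_injective _ hinj, Finset.card_univ, Fintype.card_fin]
  have hlt : A.card < d := by
    apply hd
    intro K hK
    refine ⟨c (emb (Finset.univ.filter (fun i => a i ∈ K))), ?_⟩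
    intro x hx
    obtain ⟨i, _, rfl⟩ := Finset.mem_image.1 hx
    rw [hmem i _]
    simp
  omega

/-- Sauer–Shelah style bound on the trace family of a NIP relation. -/
lemma trace_bound {α β : Type*} (R : α → β → Prop) (d : ℕ)
    (hd : ∀ A : Finset α, (∀ K ⊆ A, ∃ b, ∀ x ∈ A, R x b ↔ x ∈ K) → A.card < d)
    (m : ℕ) (c : Fin m → β) :
    (Finset.univ.filter (fun u : Finset (Fin m) => ∃ x : α, ∀ i, i ∈ u ↔ R x (c i))).card
      ≤ (m+1) ^ (2^d) := by
  set Tr := Finset.univ.filter (fun u : Finset (Fin m) => ∃ x : α, ∀ i, i ∈ u ↔ R x (c i)) with hTr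
  have hvc : Tr.vcDim < 2^d := by
    rw [Finset.vcDim]
    rw [Finset.sup_lt_iff (by positivity)]
    intro s hs
    rw [Finset.mem_shatterer] at hs
    have hcoe : Fintype.card {i // i ∈ s} < 2^d := by
      apply dual_bound R d hd (fun i : {i // i ∈ s} => c i.1)
      intro K
      obtain ⟨u, hu, hsu⟩ := hs (show K.map (Function.Embedding.subtype _) ⊆ s by
        intro x hx
        obtain ⟨⟨y, hy⟩, _, rfl⟩ := Finset.mem_map.1 hx
        exact hy)
      rw [hTr, Finset.mem_filter] at hu
      obtain ⟨-, x, hx⟩ := hu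
      refine ⟨x, fun i => ?_⟩
      rw [← hx i.1]
      constructor
      · intro hi
        have : (i : Fin m) ∈ s ∩ u := Finset.mem_inter.2 ⟨i.2, hi⟩
        rw [hsu] at this
        obtain ⟨⟨y, hy⟩, hyK, hyeq⟩ := Finset.mem_map.1 this
        have hyi : (⟨y, hy⟩ : {i // i ∈ s}) = i := by
          apply Subtype.ext
          exact hyeq
        rwa [hyi] at hyK
      · intro hiK
        have : (i : Fin m) ∈ K.map (Function.Embedding.subtype _) :=
          Finset.mem_map.2 ⟨i, hiK, rfl⟩
        rw [← hsu] at this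
        exact (Finset.mem_inter.1 this).2
    rwa [Fintype.card_coe] at hcoe
  calc Tr.card ≤ Tr.shatterer.card := Finset.card_le_card_shatterer Tr
    _ ≤ ∑ k ∈ Finset.Iic Tr.vcDim, (Fintype.card (Fin m)).choose k :=
        Finset.card_shatterer_le_sum_vcDim
    _ = ∑ k ∈ Finset.Iic Tr.vcDim, m.choose k := by rw [Fintype.card_fin]
    _ ≤ (m+1) ^ (Tr.vcDim + 1) := sum_choose_le m Tr.vcDim
    _ ≤ (m+1) ^ (2^d) := Nat.pow_le_pow_right (by omega) (by omega)


lemma fact_i (m m' : ℕ) (ε : ℝ) (hε : 0 < ε) (hm : 1 ≤ m)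
    (hm' : 128 * (Real.log (2*(m:ℝ)) + 1) / ε^2 ≤ (m' : ℝ)) :
    (m:ℝ) * (2 * Real.exp (-(m':ℝ) * (ε/4)^2 / 8)) < 1 := by
  have hm0 : (1:ℝ) ≤ (m:ℝ) := by exact_mod_cast hm
  have h1 : 128 * (Real.log (2*(m:ℝ)) + 1) ≤ (m':ℝ) * ε^2 := by
    rw [div_le_iff₀ (by positivity)] at hm'
    linarith
  have h2 : -(m':ℝ) * (ε/4)^2/8 ≤ -(Real.log (2*(m:ℝ)) + 1) := by
    nlinarith
  have h3 : Real.exp (-(m':ℝ) * (ε/4)^2 / 8) ≤ (2*(m:ℝ))⁻¹ * Real.exp (-1) := by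
    calc Real.exp (-(m':ℝ) * (ε/4)^2 / 8) ≤ Real.exp (-(Real.log (2*(m:ℝ)) + 1)) :=
          Real.exp_le_exp.2 h2
    _ = (2*(m:ℝ))⁻¹ * Real.exp (-1) := by
        rw [neg_add, Real.exp_add, Real.exp_neg, Real.exp_log (by positivity)]
  have hexp1 : Real.exp (-1) < 1 := by
    rw [← Real.exp_zero]
    exact Real.exp_lt_exp.2 (by norm_num)
  have hme : (m:ℝ) * (2 * ((2*(m:ℝ))⁻¹ * Real.exp (-1))) = Real.exp (-1) := by
    field_simp
  calc (m:ℝ) * (2 * Real.exp (-(m':ℝ) * (ε/4)^2 / 8))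
      ≤ (m:ℝ) * (2 * ((2*(m:ℝ))⁻¹ * Real.exp (-1))) := by
        apply mul_le_mul_of_nonneg_left _ (by positivity)
        apply mul_le_mul_of_nonneg_left h3 (by norm_num)
    _ = Real.exp (-1) := hme
    _ < 1 := hexp1

lemma fact_ii (d₂ M m m' : ℕ) (hd₂ : 1 ≤ d₂) (ε : ℝ) (hε : 0 < ε) (hε1 : ε ≤ 1)
    (hM : (100000 * (d₂:ℝ)) / ε^2 ≤ (M:ℝ)) (hm : m = M^2) (hm1 : 1 ≤ m)
    (hm' : (m' : ℝ) ≤ 128 * (Real.log (2*(m:ℝ)) + 1) / ε^2 + 1) :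
    ¬((2:ℕ)^m ≤ (m+1)^(d₂ * m')) := by
  intro hcon
  have hεsq : 0 < ε^2 := by positivity
  have hm0 : (1:ℝ) ≤ (m:ℝ) := by exact_mod_cast hm1
  have hM1 : (1:ℝ) ≤ (M:ℝ) := by
    have : 1 ≤ M := by
      rcases Nat.eq_zero_or_pos M with h | h
      · rw [h] at hm; simp [hm] at hm1
      · exact h
    exact_mod_cast this
  set A := Real.sqrt (Real.sqrt ((m:ℝ)+1)) with hA
  have hin : (0:ℝ) ≤ (m:ℝ)+1 := by linarith
  have hsq1 : (0:ℝ) ≤ Real.sqrt ((m:ℝ)+1) := Real.sqrt_nonneg _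
  have hA0 : 0 ≤ A := Real.sqrt_nonneg _
  have hA2 : A^2 = Real.sqrt ((m:ℝ)+1) := Real.sq_sqrt hsq1
  have hA4 : (A^2)^2 = (m:ℝ)+1 := by rw [hA2]; exact Real.sq_sqrt hin
  have hA1 : 1 ≤ A := by
    have h1 : (1:ℝ) ≤ Real.sqrt ((m:ℝ)+1) := by
      have : Real.sqrt 1 ≤ Real.sqrt ((m:ℝ)+1) := Real.sqrt_le_sqrt (by linarith)
      simpa using this
    have : Real.sqrt 1 ≤ A := Real.sqrt_le_sqrt h1
    simpa using this
  have hlog1 : Real.log ((m:ℝ)+1) ≤ 4*A := by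
    have he : Real.log ((m:ℝ)+1) = 4 * Real.log A := by
      rw [hA, Real.log_sqrt hsq1, Real.log_sqrt hin]; ring
    rw [he]
    have := Real.log_le_sub_one_of_pos (show (0:ℝ) < A by linarith)
    linarith
  have hlog1' : 0 ≤ Real.log ((m:ℝ)+1) := Real.log_nonneg (by linarith)
  have hlog2 : Real.log (2*(m:ℝ)) ≤ 8*A := by
    have h2m : 2*(m:ℝ) ≤ ((m:ℝ)+1)^2 := by nlinarith
    calc Real.log (2*(m:ℝ)) ≤ Real.log (((m:ℝ)+1)^2) :=
          Real.log_le_log (by positivity) h2m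
    _ = 2 * Real.log ((m:ℝ)+1) := by rw [Real.log_pow]; push_cast; ring
    _ ≤ 8*A := by linarith
  set E := 1/ε^2 with hE
  have hE0 : 0 < E := by positivity
  have hE1 : 1 ≤ E := by
    rw [hE, le_div_iff₀ hεsq]; nlinarith
  have hm'E : (m':ℝ) ≤ 128 * (Real.log (2*(m:ℝ)) + 1) * E + 1 := by
    have : 128 * (Real.log (2*(m:ℝ)) + 1) / ε^2 = 128 * (Real.log (2*(m:ℝ)) + 1) * E := by
      rw [hE]; ring
    linarith [hm', this.symm.le]
  have hME : 100000 * (d₂:ℝ) * E ≤ (M:ℝ) := by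
    have : (100000 * (d₂:ℝ)) / ε^2 = 100000 * (d₂:ℝ) * E := by rw [hE]; ring
    linarith [hM, this.le]
  have hlogm2 : 0 ≤ Real.log (2*(m:ℝ)) := Real.log_nonneg (by linarith)
  have k1 : 128 * (Real.log (2*(m:ℝ))+1) * E ≤ 1024*(A*E) + 128*E := by
    nlinarith [mul_nonneg (sub_nonneg.2 hlog2) hE0.le]
  have k2 : (1:ℝ) ≤ A*E := by nlinarith [mul_le_mul hA1 hE1 (by norm_num) hA0]
  have k3 : E ≤ A*E := by linarith [mul_nonneg (sub_nonneg.2 hA1) hE0.le]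
  have hm'le : (m':ℝ) ≤ 3000*(A*E) := by linarith [hm'E, k1, k2, k3]
  have hm'0 : (0:ℝ) ≤ (m':ℝ) := Nat.cast_nonneg _
  have hd₂0 : (1:ℝ) ≤ (d₂:ℝ) := by exact_mod_cast hd₂
  have hlogmain : (m:ℝ) * Real.log 2 ≤ ((d₂:ℝ) * (m':ℝ)) * Real.log ((m:ℝ)+1) := by
    have hc : ((2:ℝ))^m ≤ ((m:ℝ)+1)^(d₂ * m') := by
      have h0 := (Nat.cast_le (α := ℝ)).2 hcon
      push_cast at h0
      exact h0
    have h := Real.log_le_log (by positivity) hc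
    rw [Real.log_pow, Real.log_pow] at h
    push_cast at h
    linarith [h]
  have hlog2half : (1/2 : ℝ) ≤ Real.log 2 := by
    linarith [Real.log_two_gt_d9]
  -- m ≤ 24000 d₂ E A²
  have c1 : ((d₂:ℝ) * (m':ℝ)) * Real.log ((m:ℝ)+1) ≤ ((d₂:ℝ) * (m':ℝ)) * (4*A) :=
    mul_le_mul_of_nonneg_left hlog1 (by positivity)
  have c2 : (d₂:ℝ) * (m':ℝ) ≤ (d₂:ℝ) * (3000*(A*E)) :=
    mul_le_mul_of_nonneg_left hm'le (by positivity)
  have c3 : ((d₂:ℝ) * (m':ℝ)) * (4*A) ≤ ((d₂:ℝ) * (3000*(A*E))) * (4*A) :=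
    mul_le_mul_of_nonneg_right c2 (by positivity)
  have c4 : ((d₂:ℝ) * (3000*(A*E))) * (4*A) = 12000*(d₂:ℝ)*E*A^2 := by ring
  have c5 : (m:ℝ) * (1/2) ≤ (m:ℝ) * Real.log 2 :=
    mul_le_mul_of_nonneg_left hlog2half (by positivity)
  have hmain2 : (m:ℝ) ≤ 24000 * (d₂:ℝ) * E * A^2 := by linarith
  have hsqM : A^2 ≤ 1.5*(M:ℝ) := by
    have hmM : (m:ℝ) = (M:ℝ)^2 := by rw [hm]; push_cast; ring
    have h1 : (m:ℝ)+1 ≤ (1.5*(M:ℝ))^2 := by nlinarith [hM1]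
    rw [hA2]
    calc Real.sqrt ((m:ℝ)+1) ≤ Real.sqrt ((1.5*(M:ℝ))^2) := Real.sqrt_le_sqrt h1
      _ = 1.5*(M:ℝ) := Real.sqrt_sq (by positivity)
  have hmM : (m:ℝ) = (M:ℝ)^2 := by rw [hm]; push_cast; ring
  have c6 : 24000 * (d₂:ℝ) * E * A^2 ≤ 24000 * (d₂:ℝ) * E * (1.5*(M:ℝ)) :=
    mul_le_mul_of_nonneg_left hsqM (by positivity)
  have h1 : (M:ℝ) * (M:ℝ) ≤ (36000 * (d₂:ℝ) * E) * (M:ℝ) := by nlinarith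
  have hfin : (M:ℝ) ≤ 36000 * (d₂:ℝ) * E :=
    le_of_mul_le_mul_right h1 (by linarith)
  have k4 : (1:ℝ) ≤ (d₂:ℝ)*E := by nlinarith [hd₂0, hE1, hE0]
  linarith [hME, hfin, k4]


theorem core {α β : Type*} (R : α → β → Prop) (d : ℕ)
    (hd : ∀ A : Finset α, (∀ K ⊆ A, ∃ b, ∀ x ∈ A, R x b ↔ x ∈ K) → A.card < d)
    (f : ℕ → β → ℝ)
    (hf : ∀ n, ∃ (k : ℕ) (w : Fin k → ℝ) (a : Fin k → α),
      (∀ x, 0 ≤ w x) ∧ (∑ x, w x) = 1 ∧ ∀ b, f n b = ∑ x, w x * bval (R (a x) b))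
    (r ε : ℝ) (hε : 0 < ε)
    (hind : ∀ I : Set ℕ, ∃ b, (∀ n, f n b ≤ r ↔ n ∈ I) ∧ (∀ n, r + ε ≤ f n b ↔ n ∉ I)) :
    False := by
  -- range of f
  have hrange : ∀ n b, 0 ≤ f n b ∧ f n b ≤ 1 := by
    intro n b
    obtain ⟨k, w, a, hw0, hw1, hfb⟩ := hf n
    rw [hfb b]
    constructor
    · exact Finset.sum_nonneg fun x _ => mul_nonneg (hw0 x) (bval_nonneg _)
    · calc ∑ x, w x * bval (R (a x) b) ≤ ∑ x, w x :=
          Finset.sum_le_sum fun x _ => by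
            nlinarith [hw0 x, bval_le_one (R (a x) b), bval_nonneg (R (a x) b)]
      _ = 1 := hw1
  -- ε ≤ 1 and 0 ≤ r
  obtain ⟨bu, hbu, -⟩ := hind Set.univ
  obtain ⟨be, -, hbe⟩ := hind ∅
  have hr0 : 0 ≤ r := le_trans (hrange 0 bu).1 ((hbu 0).2 (Set.mem_univ 0))
  have hre : r + ε ≤ 1 := le_trans ((hbe 0).2 (fun h => h)) (hrange 0 be).2
  have hε1 : ε ≤ 1 := by linarith
  -- Step 1 : transposition
  have S1 : ∀ m : ℕ, ∃ c : Fin m → β, ∀ T : Finset (Fin m), ∃ n : ℕ,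
      ∀ i, (f n (c i) ≤ r ↔ i ∈ T) ∧ (r + ε ≤ f n (c i) ↔ i ∉ T) := by
    intro m
    have henc : Function.Injective (Encodable.encode (α := Finset (Fin m))) :=
      Encodable.encode_injective
    choose b hb1 hb2 using hind
    refine ⟨fun i => b {n | ∃ T : Finset (Fin m), Encodable.encode T = n ∧ i ∈ T},
      fun T => ⟨Encodable.encode T, fun i => ?_⟩⟩
    constructor
    · rw [hb1]
      simp only [Set.mem_setOf_eq]
      constructor
      · rintro ⟨T', hT', hi⟩; rwa [← henc hT']
      · intro hi; exact ⟨T, rfl, hi⟩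
    · rw [hb2]
      simp only [Set.mem_setOf_eq, not_exists]
      constructor
      · intro h hi; exact (h T) ⟨rfl, hi⟩
      · intro hi T' hc; exact hi (henc hc.1 ▸ hc.2)
  -- parameters
  set d₂ : ℕ := 2^d with hd₂def
  have hd₂1 : 1 ≤ d₂ := Nat.one_le_two_pow
  set M : ℕ := ⌈(100000 * (d₂:ℝ)) / ε^2⌉₊ + 1 with hMdef
  set m : ℕ := M^2 with hmdef
  have hM1 : 1 ≤ M := by omega
  have hm1 : 1 ≤ m := by
    rw [hmdef]; exact Nat.one_le_pow _ _ (by omega)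
  have hmcast : (1:ℝ) ≤ (m:ℝ) := by exact_mod_cast hm1
  have hlogpos : (0:ℝ) < 128 * (Real.log (2*(m:ℝ)) + 1) / ε^2 := by
    have : 0 ≤ Real.log (2*(m:ℝ)) := Real.log_nonneg (by linarith)
    positivity
  set m' : ℕ := ⌈128 * (Real.log (2*(m:ℝ)) + 1) / ε^2⌉₊ with hm'def
  have hm'1 : 1 ≤ m' := by
    rw [hm'def]
    exact Nat.one_le_iff_ne_zero.2 (by
      intro h
      rw [Nat.ceil_eq_zero] at h
      linarith)
  have hm'cast : (1:ℝ) ≤ (m':ℝ) := by exact_mod_cast hm'1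
  have hm'lb : 128 * (Real.log (2*(m:ℝ)) + 1) / ε^2 ≤ (m' : ℝ) := Nat.le_ceil _
  have hm'ub : (m' : ℝ) ≤ 128 * (Real.log (2*(m:ℝ)) + 1) / ε^2 + 1 :=
    le_of_lt (Nat.ceil_lt_add_one hlogpos.le)
  obtain ⟨c, hc⟩ := S1 m
  set Tr : Finset (Finset (Fin m)) :=
    Finset.univ.filter (fun u : Finset (Fin m) => ∃ x : α, ∀ i, i ∈ u ↔ R x (c i)) with hTrdef
  -- KEY step
  have KEY : ∀ T : Finset (Fin m), ∃ g : Fin m' → {u // u ∈ Tr},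
      ∀ i : Fin m, ((∑ j, bval ((i : Fin m) ∈ (g j : Finset (Fin m))))
          < (m':ℝ) * (r + ε/2) ↔ i ∈ T) := by
    intro T
    obtain ⟨n, hn⟩ := hc T
    obtain ⟨k, w, a, hw0, hw1, hfn⟩ := hf n
    obtain ⟨v, hv⟩ := good_tuple (m := m) w hw0 hw1
      (fun i x => bval (R (a x) (c i)))
      (fun i x => bval_nonneg _) (fun i x => bval_le_one _)
      (ε/4) (by positivity) (by linarith)
      (fact_i m m' ε hε hm1 hm'lb)
    refine ⟨fun j => ⟨Finset.univ.filter (fun i => R (a (v j)) (c i)), ?_⟩, ?_⟩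
    · rw [hTrdef, Finset.mem_filter]
      exact ⟨Finset.mem_univ _, a (v j), fun i => by simp⟩
    intro i
    have hmueq : ∑ x, w x * bval (R (a x) (c i)) = f n (c i) := (hfn (c i)).symm
    have hvi := hv i
    rw [hmueq] at hvi
    have hsum : (∑ j, bval ((i : Fin m) ∈
        (Finset.univ.filter (fun i' => R (a (v j)) (c i')) : Finset (Fin m))))
        = ∑ j, bval (R (a (v j)) (c i)) := by
      apply Finset.sum_congr rfl
      intro j _
      congr 1
      simp
    constructor
    · -- small average → i ∈ T
      intro hlt
      by_contra hiT
      have h1 : r + ε ≤ f n (c i) := (hn i).2.2 hiT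
      have h2 : (m':ℝ) * (f n (c i)) - (m':ℝ) * (ε/4) < (m':ℝ) * (r + ε/2) := by
        have := abs_lt.1 hvi
        rw [hsum] at hlt
        linarith [this.1]
      nlinarith [hm'cast]
    · -- i ∈ T → small average
      intro hiT
      have h1 : f n (c i) ≤ r := (hn i).1.2 hiT
      have h2 : (∑ j, bval (R (a (v j)) (c i))) < (m':ℝ) * (f n (c i)) + (m':ℝ) * (ε/4) := by
        have := abs_lt.1 hvi
        linarith [this.2]
      rw [hsum]
      nlinarith [hm'cast]
  choose g hg using KEY
  have hinj : Function.Injective g := by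
    intro T T' hTT'
    ext i
    rw [← hg T i, hTT', hg T' i]
  have hcard := Fintype.card_le_of_injective g hinj
  rw [Fintype.card_finset, Fintype.card_fin] at hcard
  have hcard2 : Fintype.card (Fin m' → {u // u ∈ Tr}) = Tr.card ^ m' := by
    rw [Fintype.card_fun, Fintype.card_coe, Fintype.card_fin]
  rw [hcard2] at hcard
  have hTrb : Tr.card ≤ (m+1)^d₂ := trace_bound R d hd m c
  have hfin : (2:ℕ)^m ≤ (m+1)^(d₂ * m') := by
    calc (2:ℕ)^m ≤ Tr.card ^ m' := hcard
      _ ≤ ((m+1)^d₂)^m' := Nat.pow_le_pow_left hTrb m'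
      _ = (m+1)^(d₂*m') := by rw [← pow_mul]
  exact fact_ii d₂ M m m' hd₂1 ε hε hε1
    (by rw [hMdef]; push_cast; linarith [Nat.le_ceil ((100000 * (d₂:ℝ)) / ε^2)])
    hmdef hm1 hm'ub hfin

/-- Value of `FunF` at the class of a tuple. -/
lemma funf_eval {L : FirstOrder.Language.{0,0}} {U : Type} [L.Structure U]
    (M : L.ElementarySubstructure U) {nx ny : ℕ}
    (φ : L.Formula (Fin nx ⊕ Fin ny)) (a : Fin nx → M) (b : Fin ny → U) :
    FunF φ M a (Quotient.mk (typeSetoid M ny) b)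
      = bval (φ.Realize (Sum.elim (fun i => (a i : U)) b)) := by
  unfold FunF
  unfold Set.indicator
  unfold bval
  by_cases h : φ.Realize (Sum.elim (fun i => (a i : U)) b)
  · rw [if_pos h, if_pos]
    exact ⟨b, rfl, h⟩
  · rw [if_neg h, if_neg]
    rintro ⟨b', hb', hφ⟩
    have hst : SameTypeOver M b' b := Quotient.exact hb'
    have hrel := hst nx (φ.relabel (Sum.elim Sum.inr Sum.inl)) a
    rw [FirstOrder.Language.Formula.realize_relabel,
      FirstOrder.Language.Formula.realize_relabel] at hrel
    have e1 : (Sum.elim b' (fun i => (a i : U))) ∘ (Sum.elim Sum.inr Sum.inl)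
        = Sum.elim (fun i => (a i : U)) b' := by
      funext x; cases x <;> rfl
    have e2 : (Sum.elim b (fun i => (a i : U))) ∘ (Sum.elim Sum.inr Sum.inl)
        = Sum.elim (fun i => (a i : U)) b := by
      funext x; cases x <;> rfl
    rw [e1, e2] at hrel
    exact h (hrel.1 hφ)

end
end NIPAux3p14

/-- **Theorem 3.14.** If `φ(x;y)` is NIP, then `conv(𝔽_M^φ)`, viewed as a subset of
`ℝ^{S_y(M)}`, is sequentially dependent. -/
theorem stmt_7
    {L : FirstOrder.Language.{0, 0}} (T : L.Theory) (hT : T.IsComplete)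
    (hL : L.card ≤ Cardinal.aleph0)
    {U : Type} [L.Structure U] [Nonempty U] (hUT : T.Model U)
    (κ : Cardinal.{0}) (hκ : Cardinal.aleph0 < κ) (hreg : κ.IsRegular)
    (hsat : IsSaturated L U κ) (hhom : IsStronglyHomogeneous L U κ)
    (M : L.ElementarySubstructure U) (hM : #M < κ)
    {nx ny : ℕ} (φ : L.Formula (Fin nx ⊕ Fin ny))    (hNIP : FormulaIsNIP U φ) :
    ¬ SeqIndependent (convexHull ℝ (FamilyF φ M)) := by
  classical
  intro hseq
  obtain ⟨F, hFmem, r, ε, hε, hind0⟩ := hseq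
  -- extract the finite VC-type bound from NIP
  unfold FormulaIsNIP FormulaHasIP at hNIP
  push_neg at hNIP
  obtain ⟨d, hd0⟩ := hNIP
  have hd : ∀ A : Finset (Fin nx → U),
      (∀ K ⊆ A, ∃ b : Fin ny → U, ∀ x ∈ A, φ.Realize (Sum.elim x b) ↔ x ∈ K) →
      A.card < d := by
    intro A hA
    by_contra hge
    push_neg at hge
    obtain ⟨K, hK, hcontra⟩ := hd0 A hge
    obtain ⟨b, hb⟩ := hA K hK
    obtain ⟨cc, hcA, hnot⟩ := hcontra b
    rcases hnot with ⟨hreal, hnotK⟩ | ⟨hnreal, hKmem⟩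
    · exact hnotK ((hb cc hcA).1 hreal)
    · exact hnreal ((hb cc hcA).2 hKmem)
  -- the transported sequence of functions on tuples
  set f : ℕ → (Fin ny → U) → ℝ :=
    fun n b => F n (Quotient.mk (typeSetoid M ny) b) with hfdef
  -- convex-combination representation of each `f n`
  have hf : ∀ n, ∃ (k : ℕ) (w : Fin k → ℝ) (aa : Fin k → (Fin nx → U)),
      (∀ x, 0 ≤ w x) ∧ (∑ x, w x) = 1 ∧
      ∀ b, f n b = ∑ x, w x * NIPAux3p14.bval (φ.Realize (Sum.elim (aa x) b)) := by
    intro n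
    have hmem := hFmem n
    rw [convexHull_eq] at hmem
    obtain ⟨ι, t, w, z, hw0, hw1, hz, hcc⟩ := hmem
    have hz' : ∀ i : {x // x ∈ t}, ∃ a : Fin nx → M, z i.1 = FunF φ M a := by
      intro i
      obtain ⟨a, ha⟩ := hz i.1 i.2
      exact ⟨a, ha.symm⟩
    choose A hA using hz'
    set e := t.equivFin.symm with hedef
    refine ⟨t.card, fun x => w ((e x) : ι),
      fun x => (fun q => ((A (e x)) q : U)), fun x => hw0 _ (e x).2, ?_, ?_⟩
    · calc ∑ x, w ((e x) : ι) = ∑ i : {x // x ∈ t}, w i.1 := Equiv.sum_comp e (fun i : {x // x ∈ t} => w i.1)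
      _ = ∑ i ∈ t, w i := Finset.sum_coe_sort t w
      _ = 1 := hw1
    · intro b
      have hFn : F n = ∑ i ∈ t, w i • z i := by
        rw [← Finset.centerMass_eq_of_sum_1 t z hw1, hcc]
      have h1 : f n b = ∑ i ∈ t, w i * z i (Quotient.mk (typeSetoid M ny) b) := by
        rw [hfdef]
        simp only [hFn, Finset.sum_apply, Pi.smul_apply, smul_eq_mul]
        exact Finset.sum_apply _ t (fun i => w i • z i)
      rw [h1, ← Finset.sum_coe_sort t
        (fun i => w i * z i (Quotient.mk (typeSetoid M ny) b)),
        ← Equiv.sum_comp e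
          (fun i : {x // x ∈ t} => w i.1 * z i.1 (Quotient.mk (typeSetoid M ny) b))]
      apply Finset.sum_congr rfl
      intro x _
      rw [hA (e x), NIPAux3p14.funf_eval]
  -- the independence data transported to tuples
  have hind : ∀ I : Set ℕ, ∃ b : Fin ny → U,
      (∀ n, f n b ≤ r ↔ n ∈ I) ∧ (∀ n, r + ε ≤ f n b ↔ n ∉ I) := by
    intro I
    obtain ⟨p, h1, h2⟩ := hind0 I
    obtain ⟨b0, hb0⟩ := Quotient.exists_rep p
    refine ⟨b0, fun n => ?_, fun n => ?_⟩
    · have : f n b0 = F n p := by rw [hfdef]; simp only []; rw [hb0]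
      rw [this]
      exact Set.ext_iff.1 h1 n
    · have : f n b0 = F n p := by rw [hfdef]; simp only []; rw [hb0]
      rw [this]
      exact (Set.ext_iff.1 h2 n).trans (Set.mem_compl_iff I n)
  exact NIPAux3p14.core (fun a b => φ.Realize (Sum.elim a b)) d hd f hf r ε hε hind
end

section
/- Let T be a complete first-order theory in a countable language L, U a monster model of T (κ-saturated and strongly κ-homogeneous for a sufficiently large cardinal κ), M an elementary substructure of U with |M| < κ, and φ(x;y) a partitioned L-formula. Let μ ∈ 𝔐_φ(U). Then μ is φ-definable over M if and only if μ is φ-invariant over M and the map F_μ^φ : S_y(M) → [0,1] is continuous. -/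
open FirstOrder Cardinal Set Filter Topology

variable {L : FirstOrder.Language.{0, 0}}

/-! ### Auxiliary machinery -/

section Aux

variable {U : Type} [L.Structure U]

/-- Any representative of `⟦b⟧` has the same type over `M` as `b`. -/
lemma out_mk_same (M : L.ElementarySubstructure U) {n : ℕ} (b : Fin n → U) :
    SameTypeOver M (Quotient.out (Quotient.mk (typeSetoid M n) b)) b := by
  have h := Quotient.exact (Quotient.out_eq (Quotient.mk (typeSetoid M n) b))
  exact h

/-- The basic clopen subset of `S_n(M)` determined by a formula with parameters in `M`. -/
def genSet (M : L.ElementarySubstructure U) {n k : ℕ}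
    (ψ : L.Formula (Fin n ⊕ Fin k)) (m : Fin k → M) : Set (TypeSpace M n) :=
  { p | ψ.Realize (Sum.elim (Quotient.out p) (fun i => (m i : U))) }

lemma mem_genSet (M : L.ElementarySubstructure U) {n k : ℕ}
    (ψ : L.Formula (Fin n ⊕ Fin k)) (m : Fin k → M) (b : Fin n → U) :
    Quotient.mk (typeSetoid M n) b ∈ genSet M ψ m ↔
      ψ.Realize (Sum.elim b (fun i => (m i : U))) :=
  out_mk_same M b k ψ m

lemma genSet_eq (M : L.ElementarySubstructure U) {n k : ℕ}
    (ψ : L.Formula (Fin n ⊕ Fin k)) (m : Fin k → M) :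
    genSet M ψ m = { p : TypeSpace M n | ∃ b : Fin n → U,
      Quotient.mk (typeSetoid M n) b = p ∧
        ψ.Realize (Sum.elim b (fun i => (m i : U))) } := by
  ext p
  constructor
  · intro h
    exact ⟨Quotient.out p, Quotient.out_eq p, h⟩
  · rintro ⟨b, rfl, h⟩
    exact (mem_genSet M ψ m b).2 h

lemma isOpen_genSet (M : L.ElementarySubstructure U) {n k : ℕ}
    (ψ : L.Formula (Fin n ⊕ Fin k)) (m : Fin k → M) :
    IsOpen (genSet M ψ m) :=
  TopologicalSpace.GenerateOpen.basic _ ⟨k, ψ, m, genSet_eq M ψ m⟩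

lemma realize_relabel_map {n k : ℕ} {γ : Type} (ψ : L.Formula (Fin n ⊕ Fin k))
    (f : Fin k → γ) (c : γ → U) (b : Fin n → U) :
    (ψ.relabel (Sum.map id f)).Realize (Sum.elim b c) ↔
      ψ.Realize (Sum.elim b (c ∘ f)) := by
  rw [FirstOrder.Language.Formula.realize_relabel]
  have : (Sum.elim b c) ∘ Sum.map id f = Sum.elim b (c ∘ f) := by
    funext x; cases x <;> rfl
  rw [this]

/-- Combining a finite family of formulas with parameters in `M` so that they share a
single parameter tuple. -/
lemma combine_family (M : L.ElementarySubstructure U) {n : ℕ} :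
    ∀ (mc : ℕ) (k : Fin mc → ℕ) (ψ : ∀ i, L.Formula (Fin n ⊕ Fin (k i)))
      (mm : ∀ i, Fin (k i) → M),
    ∃ (K : ℕ) (c : Fin K → M) (ψ' : Fin mc → L.Formula (Fin n ⊕ Fin K)),
      ∀ (i : Fin mc) (b : Fin n → U),
        (ψ' i).Realize (Sum.elim b (fun j => (c j : U))) ↔
          (ψ i).Realize (Sum.elim b (fun j => (mm i j : U))) := by
  intro mc
  induction mc with
  | zero => exact fun k ψ mm => ⟨0, Fin.elim0, Fin.elim0, fun i => i.elim0⟩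
  | succ N ih =>
    intro k ψ mm
    obtain ⟨K, c, ψ', hψ'⟩ := ih (fun i => k i.succ) (fun i => ψ i.succ) (fun i => mm i.succ)
    refine ⟨k 0 + K, Fin.append (mm 0) c,
      Fin.cases ((ψ 0).relabel (Sum.map id (Fin.castAdd K)))
        (fun i => (ψ' i).relabel (Sum.map id (Fin.natAdd (k 0)))), ?_⟩
    intro i b
    refine Fin.cases ?_ ?_ i
    · simp only [Fin.cases_zero]
      rw [realize_relabel_map]
      have : ((fun j => ((Fin.append (mm 0) c j : M) : U)) ∘ Fin.castAdd K)
          = fun j => ((mm 0 j : M) : U) := by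
        funext j; simp [Fin.append_left]
      rw [this]
    · intro i
      simp only [Fin.cases_succ]
      rw [realize_relabel_map]
      have : ((fun j => ((Fin.append (mm 0) c j : M) : U)) ∘ Fin.natAdd (k 0))
          = fun j => ((c j : M) : U) := by
        funext j; simp [Fin.append_right]
      rw [this]
      exact hψ' i b

/-- Every open neighbourhood in `S_n(M)` contains a basic formula-defined neighbourhood. -/
lemma exists_genSet_nbhd (M : L.ElementarySubstructure U) {n : ℕ}
    {O : Set (TypeSpace M n)} (hO : IsOpen O) :
    ∀ p ∈ O, ∃ (k : ℕ) (ψ : L.Formula (Fin n ⊕ Fin k)) (m : Fin k → M),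
      p ∈ genSet M ψ m ∧ genSet M ψ m ⊆ O := by
  have hO' : TopologicalSpace.GenerateOpen
      { S | ∃ (k : ℕ) (ψ : L.Formula (Fin n ⊕ Fin k)) (m : Fin k → M),
        S = { p : TypeSpace M n | ∃ b : Fin n → U,
          Quotient.mk (typeSetoid M n) b = p ∧
            ψ.Realize (Sum.elim b (fun i => (m i : U))) } } O := hO
  clear hO
  induction hO' with
  | basic S hS =>
    obtain ⟨k, ψ, m, rfl⟩ := hS
    intro p hp
    exact ⟨k, ψ, m, by rw [genSet_eq]; exact hp, by rw [genSet_eq]⟩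
  | univ =>
    intro p _
    refine ⟨0, ⊤, Fin.elim0, ?_, fun q _ => trivial⟩
    simp [genSet, Set.mem_setOf_eq]
  | inter O₁ O₂ h₁ h₂ ih₁ ih₂ =>
    intro p hp
    obtain ⟨k₁, ψ₁, m₁, hp₁, hs₁⟩ := ih₁ p hp.1
    obtain ⟨k₂, ψ₂, m₂, hp₂, hs₂⟩ := ih₂ p hp.2
    have hmem : ∀ q : TypeSpace M n,
        q ∈ genSet M ((ψ₁.relabel (Sum.map id (Fin.castAdd k₂))) ⊓
            (ψ₂.relabel (Sum.map id (Fin.natAdd k₁)))) (Fin.append m₁ m₂) ↔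
          q ∈ genSet M ψ₁ m₁ ∧ q ∈ genSet M ψ₂ m₂ := by
      intro q
      simp only [genSet, Set.mem_setOf_eq, FirstOrder.Language.Formula.realize_inf]
      rw [realize_relabel_map, realize_relabel_map]
      have e₁ : ((fun i => ((Fin.append m₁ m₂ i : M) : U)) ∘ Fin.castAdd k₂)
          = fun i => ((m₁ i : M) : U) := by funext i; simp [Fin.append_left]
      have e₂ : ((fun i => ((Fin.append m₁ m₂ i : M) : U)) ∘ Fin.natAdd k₁)
          = fun i => ((m₂ i : M) : U) := by funext i; simp [Fin.append_right]
      rw [e₁, e₂]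
    exact ⟨k₁ + k₂, _, Fin.append m₁ m₂, (hmem p).2 ⟨hp₁, hp₂⟩,
      fun q hq => ⟨hs₁ ((hmem q).1 hq).1, hs₂ ((hmem q).1 hq).2⟩⟩
  | sUnion S hS ih =>
    intro p hp
    obtain ⟨O, hOS, hpO⟩ := hp
    obtain ⟨k, ψ, m, h1, h2⟩ := ih O hOS p hpO
    exact ⟨k, ψ, m, h1, h2.trans (Set.subset_sUnion_of_mem hOS)⟩

end Aux
section Aux2

variable {U : Type} [L.Structure U]

/-- Finite conjunction of formulas. -/
def finAnd {γ : Type} : ∀ (n : ℕ), (Fin n → L.Formula γ) → L.Formula γ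
  | 0, _ => ⊤
  | n + 1, f => f 0 ⊓ finAnd n (fun i => f i.succ)

lemma realize_finAnd {γ : Type} (n : ℕ) (f : Fin n → L.Formula γ) (v : γ → U) :
    (finAnd n f).Realize v ↔ ∀ i, (f i).Realize v := by
  induction n with
  | zero => simp [finAnd]
  | succ n ih =>
    simp only [finAnd, FirstOrder.Language.Formula.realize_inf, ih, Fin.forall_fin_succ]

lemma funMu_mk {nx ny : ℕ} (φ : L.Formula (Fin nx ⊕ Fin ny)) (M : L.ElementarySubstructure U)
    (μ : KeislerMeasure U φ) (hinv : PhiInvariant φ M μ) (b : Fin ny → U) :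
    FunMu φ M μ (Quotient.mk (typeSetoid M ny) b) = μ.toFun (phiSet φ b) :=
  hinv _ _ (out_mk_same M b)

end Aux2
/-- **Proposition 4.5.** `μ ∈ 𝔐_φ(U)` is `φ`-definable over `M` if and only if `μ` is
`φ`-invariant over `M` and the map `F_μ^φ : S_y(M) → [0,1]` is continuous. -/
theorem stmt_8
    {L : FirstOrder.Language.{0, 0}} (T : L.Theory) (hT : T.IsComplete)
    (hL : L.card ≤ Cardinal.aleph0)
    {U : Type} [L.Structure U] [Nonempty U] (hUT : T.Model U)
    (κ : Cardinal.{0}) (hκ : Cardinal.aleph0 < κ) (hreg : κ.IsRegular)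
    (hsat : IsSaturated L U κ) (hhom : IsStronglyHomogeneous L U κ)
    (M : L.ElementarySubstructure U) (hM : #M < κ)
    {nx ny : ℕ} (φ : L.Formula (Fin nx ⊕ Fin ny))    (μ : KeislerMeasure U φ) :
    PhiDefinable φ M μ ↔ (PhiInvariant φ M μ ∧ Continuous (FunMu φ M μ)) := by
  constructor
  · intro h
    constructor
    · intro b c hbc
      by_contra hne
      obtain ⟨m, k, ψ, cc, hpart, hvar⟩ := h _ (abs_pos.2 (sub_ne_zero.2 hne))
      obtain ⟨i, hi, -⟩ := hpart b
      exact lt_irrefl _ (hvar i b c hi ((hbc k (ψ i) cc).1 hi))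
    · rw [continuous_iff_continuousAt]
      intro p
      refine Metric.tendsto_nhds.2 fun ε hε => ?_
      obtain ⟨m, k, ψ, cc, hpart, hvar⟩ := h ε hε
      obtain ⟨i, hi, -⟩ := hpart (Quotient.out p)
      have hmemp : p ∈ genSet M (ψ i) cc := hi
      filter_upwards [(isOpen_genSet M (ψ i) cc).mem_nhds hmemp] with q hq
      rw [Real.dist_eq]
      exact hvar i (Quotient.out q) (Quotient.out p) hq hi
  · rintro ⟨hinv, hcont⟩
    intro ε hε
    have hε2 : 0 < ε / 2 := by positivity
    have key : ∀ p : TypeSpace M ny, ∃ (k : ℕ) (ψ : L.Formula (Fin ny ⊕ Fin k))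
        (mm : Fin k → M), p ∈ genSet M ψ mm ∧ ∀ q ∈ genSet M ψ mm,
          |FunMu φ M μ q - FunMu φ M μ p| < ε / 2 := by
      intro p
      have h1 : ∀ᶠ q in nhds p, dist (FunMu φ M μ q) (FunMu φ M μ p) < ε / 2 :=
        Metric.tendsto_nhds.1 hcont.continuousAt (ε / 2) hε2
      rw [Filter.eventually_iff, mem_nhds_iff] at h1
      obtain ⟨O, hOsub, hOopen, hpO⟩ := h1
      obtain ⟨k, ψ, mm, hg1, hg2⟩ := exists_genSet_nbhd M hOopen p hpO
      refine ⟨k, ψ, mm, hg1, fun q hq => ?_⟩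
      have h2 := hOsub (hg2 hq)
      rwa [Set.mem_setOf_eq, Real.dist_eq] at h2
    choose kk Ψ mm hmem hsmall using key
    classical
    have hcover : ∃ F : Finset (TypeSpace M ny), ∀ q : TypeSpace M ny,
        ∃ p ∈ F, q ∈ genSet M (Ψ p) (mm p) := by
      by_contra hc
      push_neg at hc
      set G : TypeSpace M ny → L.Formula (Fin ny ⊕ ↥M) :=
        fun p => ((Ψ p).relabel (Sum.map id (mm p))).not with hG
      have hfs : ∀ s : Finset (L.Formula (Fin ny ⊕ ↥M)), ↑s ⊆ Set.range G →
          ∃ a : Fin ny → U, ∀ χ ∈ s, χ.Realize (Sum.elim a (fun x : M => (x : U))) := by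
        intro s hs
        have hex : ∀ χ ∈ s, ∃ p, G p = χ := fun χ hχ => hs hχ
        have hne : Nonempty (TypeSpace M ny) :=
          ⟨Quotient.mk (typeSetoid M ny) (fun _ => Classical.arbitrary U)⟩
        choose! f hf using hex
        obtain ⟨q, hq⟩ := hc (s.image f)
        refine ⟨Quotient.out q, fun χ hχ => ?_⟩
        have hnot := hq (f χ) (Finset.mem_image_of_mem f hχ)
        rw [← hf χ hχ, hG]
        simp only [FirstOrder.Language.Formula.realize_not]
        rw [realize_relabel_map]
        exact hnot
      obtain ⟨a, ha⟩ := hsat (↥M) hM (fun x : M => (x : U)) ny (Set.range G) hfs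
      have h1 := ha (G (Quotient.mk (typeSetoid M ny) a)) (Set.mem_range_self _)
      rw [hG] at h1
      simp only [FirstOrder.Language.Formula.realize_not] at h1
      rw [realize_relabel_map] at h1
      exact h1 ((mem_genSet M _ _ a).1 (hmem (Quotient.mk (typeSetoid M ny) a)))
    obtain ⟨F, hF⟩ := hcover
    set pI : Fin F.card → TypeSpace M ny := fun i => (F.equivFin.symm i : _) with hpI
    obtain ⟨K, c, ψ', hψ'⟩ := combine_family M F.card (fun i => kk (pI i))
      (fun i => Ψ (pI i)) (fun i => mm (pI i))
    set θ : Fin F.card → L.Formula (Fin ny ⊕ Fin K) := fun i =>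
      ψ' i ⊓ finAnd i.1 (fun j => (ψ' (Fin.castLT j (lt_trans j.2 i.2))).not) with hθ
    have realize_θ : ∀ (i : Fin F.card) (b : Fin ny → U),
        (θ i).Realize (Sum.elim b (fun j => (c j : U))) ↔
          ((ψ' i).Realize (Sum.elim b (fun j => (c j : U))) ∧
            ∀ j : Fin i.1, ¬ (ψ' (Fin.castLT j (lt_trans j.2 i.2))).Realize
              (Sum.elim b (fun j => (c j : U)))) := by
      intro i b
      rw [hθ]
      simp only [FirstOrder.Language.Formula.realize_inf, realize_finAnd,
        FirstOrder.Language.Formula.realize_not]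
    have hcov' : ∀ b : Fin ny → U, ∃ i : Fin F.card,
        (ψ' i).Realize (Sum.elim b (fun j => (c j : U))) := by
      intro b
      obtain ⟨p, hpF, hq⟩ := hF (Quotient.mk (typeSetoid M ny) b)
      refine ⟨F.equivFin ⟨p, hpF⟩, ?_⟩
      have hpi : pI (F.equivFin ⟨p, hpF⟩) = p := by
        rw [hpI]; simp
      rw [hψ']
      have hq' := (mem_genSet M (Ψ p) (mm p) b).1 hq
      rw [← hpi] at hq'
      exact hq'
    refine ⟨F.card, K, θ, c, ?_, ?_⟩
    · intro b
      obtain ⟨i0, hi0⟩ := hcov' b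
      have hex : ∃ nn : ℕ, ∃ h : nn < F.card,
          (ψ' ⟨nn, h⟩).Realize (Sum.elim b (fun j => (c j : U))) := ⟨i0.1, i0.2, hi0⟩
      obtain ⟨hlt, hreal⟩ := Nat.find_spec hex
      refine ⟨⟨Nat.find hex, hlt⟩, (realize_θ _ b).2 ⟨hreal, fun j hj =>
        Nat.find_min hex j.2 ⟨lt_trans j.2 hlt, hj⟩⟩, ?_⟩
      intro i' hi'
      obtain ⟨h1', h2'⟩ := (realize_θ i' b).1 hi'
      apply Fin.ext
      rcases lt_trichotomy i'.1 (Nat.find hex) with hlt' | heq | hgt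
      · exact ((Nat.find_min hex hlt') ⟨i'.2, h1'⟩).elim
      · exact heq
      · exact ((h2' ⟨Nat.find hex, hgt⟩) hreal).elim
    · intro i e e' he he'
      obtain ⟨h1, -⟩ := (realize_θ i e).1 he
      obtain ⟨h1', -⟩ := (realize_θ i e').1 he'
      have hme : Quotient.mk (typeSetoid M ny) e ∈ genSet M (Ψ (pI i)) (mm (pI i)) :=
        (mem_genSet M _ _ e).2 ((hψ' i e).1 h1)
      have hme' : Quotient.mk (typeSetoid M ny) e' ∈ genSet M (Ψ (pI i)) (mm (pI i)) :=
        (mem_genSet M _ _ e').2 ((hψ' i e').1 h1')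
      have hd1 := hsmall (pI i) _ hme
      have hd2 := hsmall (pI i) _ hme'
      have heq1 := funMu_mk φ M μ hinv e
      have heq2 := funMu_mk φ M μ hinv e'
      calc |μ.toFun (phiSet φ e) - μ.toFun (phiSet φ e')|
          = |FunMu φ M μ (Quotient.mk (typeSetoid M ny) e) -
              FunMu φ M μ (Quotient.mk (typeSetoid M ny) e')| := by rw [heq1, heq2]
        _ ≤ |FunMu φ M μ (Quotient.mk (typeSetoid M ny) e) - FunMu φ M μ (pI i)| +
              |FunMu φ M μ (pI i) - FunMu φ M μ (Quotient.mk (typeSetoid M ny) e')| :=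
            abs_sub_le _ _ _
        _ < ε / 2 + ε / 2 := add_lt_add hd1 (by rw [abs_sub_comm]; exact hd2)
        _ = ε := by ring
end
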